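/- arXiv:2205.01469 — 11 statements merged into one kernel-verified Lean document; each statement's English description precedes it below -/
import Mathlib

section
/- Every m×n bimatrix game G can be written in exactly one way as G = I + Z + B, where I is a normalized identical interest game, Z is a normalized zero-sum game, and B is a zero-sum equivalent potential game; that is, the space of m×n bimatrix games is the direct sum (𝓘∩𝓝) ⊕ (𝓩∩𝓝) ⊕ 𝓑 where 𝓑 = (𝓘+𝓔) ∩ (𝓩+𝓔). -/
open Matrix Filter

abbrev Game (m n : ℕ) := Matrix (Fin m) (Fin n) ℝ × Matrix (Fin m) (Fin n) ℝ

/-- A non-strategic game: player 1's payoff depends only on player 2's action and vice versa. -/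
def NonStrategic {m n : ℕ} (G : Game m n) : Prop :=
  ∃ (x : Fin n → ℝ) (y : Fin m → ℝ), (∀ i j, G.1 i j = x j) ∧ (∀ i j, G.2 i j = y i)

/-- Identical interest games: A = B. -/
def IdInterest {m n : ℕ} (G : Game m n) : Prop := G.1 = G.2

/-- Zero-sum games: A + B = 0. -/
def ZeroSum {m n : ℕ} (G : Game m n) : Prop := G.1 + G.2 = 0

/-- Normalized games: columns of A and rows of B sum to zero. -/
def Normalized {m n : ℕ} (G : Game m n) : Prop :=
  (∀ j, ∑ i, G.1 i j = 0) ∧ (∀ i, ∑ j, G.2 i j = 0)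

/-- Potential games: sums of an identical-interest game and a non-strategic game (𝓘+𝓔). -/
def IsPotentialGame {m n : ℕ} (G : Game m n) : Prop :=
  ∃ I E : Game m n, IdInterest I ∧ NonStrategic E ∧ G = I + E

/-- Games additionally equivalent to a zero-sum game (𝓩+𝓔). -/
def IsZeroSumEquivAdd {m n : ℕ} (G : Game m n) : Prop :=
  ∃ Z E : Game m n, ZeroSum Z ∧ NonStrategic E ∧ G = Z + E

/-- Zero-sum equivalent potential games, 𝓑 = (𝓘+𝓔) ∩ (𝓩+𝓔). -/
def IsZSEP {m n : ℕ} (G : Game m n) : Prop := IsPotentialGame G ∧ IsZeroSumEquivAdd G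

/-- Normalized harmonic games: normalized with mA + nB = 0. -/
def NormHarmonic (m n : ℕ) (G : Game m n) : Prop :=
  Normalized G ∧ (m : ℝ) • G.1 + (n : ℝ) • G.2 = 0

/-- Normalized potential games, 𝓟 = 𝓝 ∩ (𝓘+𝓔). -/
def NormPotential {m n : ℕ} (G : Game m n) : Prop :=
  Normalized G ∧ IsPotentialGame G

/-- Strategic equivalence: G' = (αA, βB) + E with α, β > 0 and E non-strategic. -/
def StratEquiv {m n : ℕ} (G G' : Game m n) : Prop :=
  ∃ α β : ℝ, 0 < α ∧ 0 < β ∧ ∃ E : Game m n,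
    NonStrategic E ∧ G'.1 = α • G.1 + E.1 ∧ G'.2 = β • G.2 + E.2

/-- G ∈ 𝓢(𝓩): G is strategically equivalent to some zero-sum game. -/
def StratEquivZeroSum {m n : ℕ} (G : Game m n) : Prop :=
  ∃ Z : Game m n, ZeroSum Z ∧ StratEquiv G Z

/-- G ∈ 𝓢(𝓘): G is strategically equivalent to some identical interest game. -/
def StratEquivIdInterest {m n : ℕ} (G : Game m n) : Prop :=
  ∃ I : Game m n, IdInterest I ∧ StratEquiv G I

/-- Nash equilibrium of a bimatrix game. -/
def IsNash {m n : ℕ} (G : Game m n) (p : Fin m → ℝ) (q : Fin n → ℝ) : Prop :=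
  p ∈ stdSimplex ℝ (Fin m) ∧ q ∈ stdSimplex ℝ (Fin n) ∧
  (∀ p' ∈ stdSimplex ℝ (Fin m), p' ⬝ᵥ G.1.mulVec q ≤ p ⬝ᵥ G.1.mulVec q) ∧
  (∀ q' ∈ stdSimplex ℝ (Fin n), p ⬝ᵥ G.2.mulVec q' ≤ p ⬝ᵥ G.2.mulVec q)

/-- Discrete-time fictitious play sequence of a bimatrix game. -/
def IsDFP {m n : ℕ} (G : Game m n) (p : ℕ → Fin m → ℝ) (q : ℕ → Fin n → ℝ) : Prop :=
  (∀ t, p t ∈ stdSimplex ℝ (Fin m) ∧ q t ∈ stdSimplex ℝ (Fin n)) ∧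
  ∀ t : ℕ, ∃ (i : Fin m) (j : Fin n),
    (∀ i', (G.1.mulVec (q t)) i' ≤ (G.1.mulVec (q t)) i) ∧
    (∀ j', (G.2.vecMul (p t)) j' ≤ (G.2.vecMul (p t)) j) ∧
    p (t + 1) = ((t : ℝ) / (t + 1)) • p t + ((1 : ℝ) / (t + 1)) • (Pi.single i 1 : Fin m → ℝ) ∧
    q (t + 1) = ((t : ℝ) / (t + 1)) • q t + ((1 : ℝ) / (t + 1)) • (Pi.single j 1 : Fin n → ℝ)

/-- The fictitious play property: every DFP sequence converges to the set of Nash equilibria. -/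
def HasFPP {m n : ℕ} (G : Game m n) : Prop :=
  ∀ p q, IsDFP G p q →
    Tendsto (fun t => Metric.infDist (p t, q t)
      {pq : (Fin m → ℝ) × (Fin n → ℝ) | IsNash G pq.1 pq.2}) atTop (nhds 0)

/-- The class 𝓓: at least one payoff matrix has the form M i j = x i + y j. -/
def InD {m n : ℕ} (G : Game m n) : Prop :=
  (∃ (x : Fin m → ℝ) (y : Fin n → ℝ), ∀ i j, G.1 i j = x i + y j) ∨
  (∃ (x : Fin m → ℝ) (y : Fin n → ℝ), ∀ i j, G.2 i j = x i + y j)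
noncomputable def ctr {m n : ℕ} (M : Matrix (Fin m) (Fin n) ℝ) : Matrix (Fin m) (Fin n) ℝ :=
  fun i j => M i j - (∑ k, M k j) / (m : ℝ) - (∑ l, M i l) / (n : ℝ)
    + (∑ k, ∑ l, M k l) / ((m : ℝ) * (n : ℝ))

lemma ctr_colsum {m n : ℕ} (hm : (m : ℝ) ≠ 0) (hn : (n : ℝ) ≠ 0)
    (M : Matrix (Fin m) (Fin n) ℝ) (j : Fin n) : ∑ i, ctr M i j = 0 := by
  have hswap : ∑ k, ∑ l, M k l = ∑ l, ∑ k, M k l := Finset.sum_comm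
  simp only [ctr, Finset.sum_add_distrib, Finset.sum_sub_distrib, Finset.sum_const,
    Finset.card_univ, Fintype.card_fin, nsmul_eq_mul, ← Finset.sum_div]
  field_simp
  ring_nf

lemma ctr_rowsum {m n : ℕ} (hm : (m : ℝ) ≠ 0) (hn : (n : ℝ) ≠ 0)
    (M : Matrix (Fin m) (Fin n) ℝ) (i : Fin m) : ∑ j, ctr M i j = 0 := by
  simp only [ctr, Finset.sum_add_distrib, Finset.sum_sub_distrib, Finset.sum_const,
    Finset.card_univ, Fintype.card_fin, nsmul_eq_mul, ← Finset.sum_div]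
  have : ∑ j : Fin n, ∑ k, M k j = ∑ k, ∑ l, M k l := Finset.sum_comm
  rw [this]
  field_simp
  ring

lemma ctr_eq_self {m n : ℕ} (M : Matrix (Fin m) (Fin n) ℝ)
    (hc : ∀ j, ∑ i, M i j = 0) (hr : ∀ i, ∑ j, M i j = 0) : ctr M = M := by
  funext i j
  simp [ctr, hc, hr, Finset.sum_congr rfl fun k _ => hr k]

lemma ctr_sep {m n : ℕ} (hm : (m : ℝ) ≠ 0) (hn : (n : ℝ) ≠ 0)
    (M : Matrix (Fin m) (Fin n) ℝ) (x : Fin m → ℝ) (y : Fin n → ℝ)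
    (h : ∀ i j, M i j = x i + y j) : ctr M = 0 := by
  funext i j
  have h1 : ∀ j, ∑ k, M k j = (∑ k, x k) + m * y j := by
    intro j
    simp [h, Finset.sum_add_distrib, Finset.card_univ, mul_comm]
  have h2 : ∀ i, ∑ l, M i l = n * x i + (∑ l, y l) := by
    intro i
    simp [h, Finset.sum_add_distrib, Finset.card_univ, mul_comm]
  have h3 : ∑ k, ∑ l, M k l = n * (∑ k, x k) + m * (∑ l, y l) := by
    simp only [h2]
    rw [Finset.sum_add_distrib, ← Finset.mul_sum, Finset.sum_const, Finset.card_univ,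
      Fintype.card_fin, nsmul_eq_mul]
  simp only [ctr, h i j, h1, h2, h3, Matrix.zero_apply]
  field_simp
  rw [Finset.sum_add_distrib, ← Finset.mul_sum, Finset.sum_const, Finset.card_univ,
    Fintype.card_fin, nsmul_eq_mul]
  ring

lemma ctr_add {m n : ℕ} (M N : Matrix (Fin m) (Fin n) ℝ) :
    ctr (M + N) = ctr M + ctr N := by
  funext i j
  simp [ctr, Finset.sum_add_distrib]
  ring

lemma ctr_neg {m n : ℕ} (M : Matrix (Fin m) (Fin n) ℝ) : ctr (-M) = -ctr M := by
  funext i j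
  simp [ctr, Finset.sum_neg_distrib]
  ring

lemma sub_ctr_sep {m n : ℕ} (M : Matrix (Fin m) (Fin n) ℝ) :
    ∀ i j, (M - ctr M) i j =
      ((∑ l, M i l) / (n : ℝ) - (∑ k, ∑ l, M k l) / ((m : ℝ) * (n : ℝ)))
        + (∑ k, M k j) / (m : ℝ) := by
  intro i j
  simp [ctr, Matrix.sub_apply]
  ring

theorem stmt2 {m n : ℕ} (hm : 1 ≤ m) (hn : 1 ≤ n) (G : Game m n) :
    ∃! d : Game m n × Game m n × Game m n,
      IdInterest d.1 ∧ Normalized d.1 ∧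
      ZeroSum d.2.1 ∧ Normalized d.2.1 ∧
      IsZSEP d.2.2 ∧
      G = d.1 + d.2.1 + d.2.2 := by
  have hm' : (m : ℝ) ≠ 0 := Nat.cast_ne_zero.mpr (by omega)
  have hn' : (n : ℝ) ≠ 0 := Nat.cast_ne_zero.mpr (by omega)
  set C : Matrix (Fin m) (Fin n) ℝ := (1/2 : ℝ) • (ctr G.1 + ctr G.2) with hC
  set D : Matrix (Fin m) (Fin n) ℝ := (1/2 : ℝ) • (ctr G.1 - ctr G.2) with hD
  have hsepZ : IsZSEP (G.1 - ctr G.1, G.2 - ctr G.2) := by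
    set xa : Fin m → ℝ := fun i =>
      (∑ l, G.1 i l) / (n : ℝ) - (∑ k, ∑ l, G.1 k l) / ((m : ℝ) * (n : ℝ)) with hxa
    set ya : Fin n → ℝ := fun j => (∑ k, G.1 k j) / (m : ℝ) with hya
    set xb : Fin m → ℝ := fun i =>
      (∑ l, G.2 i l) / (n : ℝ) - (∑ k, ∑ l, G.2 k l) / ((m : ℝ) * (n : ℝ)) with hxb
    set yb : Fin n → ℝ := fun j => (∑ k, G.2 k j) / (m : ℝ) with hyb
    have ha : ∀ i j, (G.1 - ctr G.1) i j = xa i + ya j := sub_ctr_sep G.1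
    have hb : ∀ i j, (G.2 - ctr G.2) i j = xb i + yb j := sub_ctr_sep G.2
    constructor
    · refine ⟨((fun i j => xa i + yb j), (fun i j => xa i + yb j)),
        ((fun i j => ya j - yb j), (fun i j => xb i - xa i)), rfl,
        ⟨fun j => ya j - yb j, fun i => xb i - xa i, fun i j => rfl, fun i j => rfl⟩, ?_⟩
      refine Prod.ext ?_ ?_ <;> funext i j <;>
        simp only [Matrix.add_apply, Prod.fst_add, Prod.snd_add, ha, hb] <;> (show (_ : ℝ) = (_ : ℝ) + (_ : ℝ); ring)
    · refine ⟨((fun i j => xa i - yb j), (fun i j => yb j - xa i)),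
        ((fun i j => ya j + yb j), (fun i j => xb i + xa i)), ?_,
        ⟨fun j => ya j + yb j, fun i => xb i + xa i, fun i j => rfl, fun i j => rfl⟩, ?_⟩
      · show (_ : Matrix (Fin m) (Fin n) ℝ) + _ = 0
        funext i j
        show (xa i - yb j) + (yb j - xa i) = 0
        ring
      · refine Prod.ext ?_ ?_ <;> funext i j <;>
          simp only [Matrix.add_apply, Prod.fst_add, Prod.snd_add, ha, hb] <;> (show (_ : ℝ) = (_ : ℝ) + (_ : ℝ); ring)
  refine ⟨((C, C), (D, -D), (G.1 - ctr G.1, G.2 - ctr G.2)), ⟨rfl, ?_, ?_, ?_, hsepZ, ?_⟩, ?_⟩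
  · constructor
    · intro j
      simp only [hC, Matrix.smul_apply, Matrix.add_apply, smul_eq_mul]
      rw [← Finset.mul_sum, Finset.sum_add_distrib,
        ctr_colsum hm' hn', ctr_colsum hm' hn']
      ring
    · intro i
      simp only [hC, Matrix.smul_apply, Matrix.add_apply, smul_eq_mul]
      rw [← Finset.mul_sum, Finset.sum_add_distrib,
        ctr_rowsum hm' hn', ctr_rowsum hm' hn']
      ring
  · show D + -D = 0
    simp
  · constructor
    · intro j
      simp only [hD, Matrix.smul_apply, Matrix.sub_apply, smul_eq_mul]
      rw [← Finset.mul_sum, Finset.sum_sub_distrib,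
        ctr_colsum hm' hn', ctr_colsum hm' hn']
      ring
    · intro i
      simp only [hD, Matrix.neg_apply, Matrix.smul_apply, Matrix.sub_apply, smul_eq_mul]
      rw [Finset.sum_neg_distrib, ← Finset.mul_sum, Finset.sum_sub_distrib,
        ctr_rowsum hm' hn', ctr_rowsum hm' hn']
      ring
  · refine Prod.ext ?_ ?_ <;> funext i j <;>
      simp only [hC, hD, Prod.fst_add, Prod.snd_add, Matrix.add_apply, Matrix.sub_apply,
        Matrix.smul_apply, Matrix.neg_apply, smul_eq_mul] <;> ring
  · rintro ⟨⟨I1, I2⟩, ⟨Z1, Z2⟩, ⟨B1, B2⟩⟩ ⟨hId, hNI, hZS, hNZ, hZSEP, hEq⟩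
    have hI12 : I1 = I2 := hId
    have hZ2 : Z2 = -Z1 := eq_neg_of_add_eq_zero_right hZS
    -- I1 is doubly normalized
    have hIc : ∀ j, ∑ i, I1 i j = 0 := hNI.1
    have hIr : ∀ i, ∑ j, I1 i j = 0 := by
      intro i; rw [show I1 = I2 from hI12]; exact hNI.2 i
    have hIctr : ctr I1 = I1 := ctr_eq_self I1 hIc hIr
    -- Z1 is doubly normalized
    have hZc : ∀ j, ∑ i, Z1 i j = 0 := hNZ.1
    have hZr : ∀ i, ∑ j, Z1 i j = 0 := by
      intro i
      have := hNZ.2 i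
      rw [show Z2 = -Z1 from hZ2] at this
      simpa [Matrix.neg_apply, Finset.sum_neg_distrib, neg_eq_zero] using this
    have hZctr : ctr Z1 = Z1 := ctr_eq_self Z1 hZc hZr
    -- B is separable in both components
    obtain ⟨⟨Ip, Ep, hIp, ⟨x1, y1, hx1, hy1⟩, heq1⟩,
      ⟨Zp, E2, hZp, ⟨x2, y2, hx2, hy2⟩, heq2⟩⟩ := hZSEP
    have hB1ctr : ctr B1 = 0 := by
      refine ctr_sep hm' hn' B1 (fun i => (y2 i - y1 i) / 2) (fun j => (x2 j + x1 j) / 2) ?_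
      intro i j
      have e1 : B1 i j = Ip.1 i j + x1 j := by
        rw [show B1 = Ip.1 + Ep.1 from congrArg Prod.fst heq1]
        simp [Matrix.add_apply, hx1]
      have e2 : B2 i j = Ip.1 i j + y1 i := by
        rw [show B2 = Ip.2 + Ep.2 from congrArg Prod.snd heq1, show Ip.2 = Ip.1 from hIp.symm]
        simp [Matrix.add_apply, hy1]
      have e3 : B1 i j = Zp.1 i j + x2 j := by
        rw [show B1 = Zp.1 + E2.1 from congrArg Prod.fst heq2]
        simp [Matrix.add_apply, hx2]
      have e4 : B2 i j = -Zp.1 i j + y2 i := by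
        have hZp2 : Zp.2 = -Zp.1 := eq_neg_of_add_eq_zero_right hZp
        rw [show B2 = Zp.2 + E2.2 from congrArg Prod.snd heq2, hZp2]
        simp [Matrix.add_apply, Matrix.neg_apply, hy2]
      linarith
    have hB2ctr : ctr B2 = 0 := by
      refine ctr_sep hm' hn' B2 (fun i => (y2 i + y1 i) / 2) (fun j => (x2 j - x1 j) / 2) ?_
      intro i j
      have e1 : B1 i j = Ip.1 i j + x1 j := by
        rw [show B1 = Ip.1 + Ep.1 from congrArg Prod.fst heq1]
        simp [Matrix.add_apply, hx1]
      have e2 : B2 i j = Ip.1 i j + y1 i := by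
        rw [show B2 = Ip.2 + Ep.2 from congrArg Prod.snd heq1, show Ip.2 = Ip.1 from hIp.symm]
        simp [Matrix.add_apply, hy1]
      have e3 : B1 i j = Zp.1 i j + x2 j := by
        rw [show B1 = Zp.1 + E2.1 from congrArg Prod.fst heq2]
        simp [Matrix.add_apply, hx2]
      have e4 : B2 i j = -Zp.1 i j + y2 i := by
        have hZp2 : Zp.2 = -Zp.1 := eq_neg_of_add_eq_zero_right hZp
        rw [show B2 = Zp.2 + E2.2 from congrArg Prod.snd heq2, hZp2]
        simp [Matrix.add_apply, Matrix.neg_apply, hy2]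
      linarith
    -- compute ctr of G
    have hG1 : G.1 = I1 + Z1 + B1 := by rw [hEq]; rfl
    have hG2 : G.2 = I2 + Z2 + B2 := by rw [hEq]; rfl
    have hA : ctr G.1 = I1 + Z1 := by
      rw [hG1, ctr_add, ctr_add, hIctr, hZctr, hB1ctr, add_zero]
    have hB : ctr G.2 = I1 - Z1 := by
      rw [hG2, ctr_add, ctr_add, ← hI12, hZ2, ctr_neg, hIctr, hZctr, hB2ctr, add_zero,
        sub_eq_add_neg]
    have hI1C : I1 = C := by
      rw [hC, hA, hB]
      funext i j
      simp only [Matrix.smul_apply, Matrix.add_apply, Matrix.sub_apply, smul_eq_mul]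
      ring
    have hZ1D : Z1 = D := by
      rw [hD, hA, hB]
      funext i j
      simp only [Matrix.smul_apply, Matrix.add_apply, Matrix.sub_apply, smul_eq_mul]
      ring
    have hB1' : B1 = G.1 - ctr G.1 := by
      rw [hA, hG1]
      abel
    have hB2' : B2 = G.2 - ctr G.2 := by
      rw [hB, hG2, ← hI12, hZ2]
      abel
    simp only [Prod.mk.injEq]
    exact ⟨⟨hI1C, hI12 ▸ hI1C⟩, ⟨hZ1D, by rw [hZ2, hZ1D]⟩, hB1', hB2'⟩
end

section
/- Every m×n bimatrix game G can be written in exactly one way as G = I + W, where I is a normalized identical interest game and W is a sum of a zero-sum game and a non-strategic game; that is, the space of m×n bimatrix games is the direct sum (𝓘∩𝓝) ⊕ (𝓩+𝓔). -/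
open Matrix Filter

/-- 𝓩+𝓔 is closed under subtraction. -/
lemma zsea_sub {m n : ℕ} {G1 G2 : Game m n} (h1 : IsZeroSumEquivAdd G1)
    (h2 : IsZeroSumEquivAdd G2) : IsZeroSumEquivAdd (G1 - G2) := by
  obtain ⟨Z1, E1, hZ1, ⟨x1, y1, hx1, hy1⟩, hG1⟩ := h1
  obtain ⟨Z2, E2, hZ2, ⟨x2, y2, hx2, hy2⟩, hG2⟩ := h2
  refine ⟨Z1 - Z2, E1 - E2, ?_, ⟨fun j => x1 j - x2 j, fun i => y1 i - y2 i, ?_, ?_⟩, ?_⟩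
  · show Z1.1 - Z2.1 + (Z1.2 - Z2.2) = 0
    have e1 : Z1.1 + Z1.2 = 0 := hZ1
    have e2 : Z2.1 + Z2.2 = 0 := hZ2
    ext i j
    have t1 := congrFun (congrFun e1 i) j
    have t2 := congrFun (congrFun e2 i) j
    simp only [Matrix.add_apply, Matrix.sub_apply, Matrix.zero_apply] at *
    linarith
  · intro i j
    show E1.1 i j - E2.1 i j = _
    rw [hx1, hx2]
  · intro i j
    show E1.2 i j - E2.2 i j = _
    rw [hy1, hy2]
  · rw [hG1, hG2]; abel

/-- A doubly-centered matrix whose double has the form x j + y i vanishes. -/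
lemma centered_eq_zero {m n : ℕ} (hm : 1 ≤ m) (hn : 1 ≤ n)
    (D : Matrix (Fin m) (Fin n) ℝ)
    (hcol : ∀ j, ∑ i, D i j = 0) (hrow : ∀ i, ∑ j, D i j = 0)
    (x : Fin n → ℝ) (y : Fin m → ℝ)
    (h : ∀ i j, D i j + D i j = x j + y i) : D = 0 := by
  have hm0 : (0:ℝ) < m := by exact_mod_cast hm
  have hn0 : (0:ℝ) < n := by exact_mod_cast hn
  have hx : ∀ j, (m:ℝ) * x j + ∑ i, y i = 0 := by
    intro j
    have hs : ∑ i, (D i j + D i j) = ∑ i, (x j + y i) :=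
      Finset.sum_congr rfl (fun i _ => h i j)
    rw [Finset.sum_add_distrib, hcol j, Finset.sum_add_distrib, Finset.sum_const,
      Finset.card_univ, Fintype.card_fin] at hs
    simpa [nsmul_eq_mul] using hs.symm
  have hy : ∀ i, (n:ℝ) * y i + ∑ j, x j = 0 := by
    intro i
    have hs : ∑ j, (D i j + D i j) = ∑ j, (x j + y i) :=
      Finset.sum_congr rfl (fun j _ => h i j)
    rw [Finset.sum_add_distrib, hrow i, Finset.sum_add_distrib, Finset.sum_const,
      Finset.card_univ, Fintype.card_fin] at hs
    simp only [nsmul_eq_mul] at hs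
    linarith [hs.symm]
  have hxy : (m:ℝ) * ∑ j, x j + (n:ℝ) * ∑ i, y i = 0 := by
    have h0 : ∑ j : Fin n, ((m:ℝ) * x j + ∑ i, y i) = 0 := by
      simp [hx]
    rw [Finset.sum_add_distrib, ← Finset.mul_sum, Finset.sum_const,
      Finset.card_univ, Fintype.card_fin, nsmul_eq_mul] at h0
    exact h0
  ext i j
  simp only [Matrix.zero_apply]
  have key : 2*(m:ℝ)*(n:ℝ)*(D i j) = 0 := by
    linear_combination (m:ℝ)*(n:ℝ)*(h i j) + (n:ℝ)*(hx j) + (m:ℝ)*(hy i) - hxy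
  have hmn : (2*(m:ℝ)*(n:ℝ)) ≠ 0 := by positivity
  rcases mul_eq_zero.mp key with h' | h'
  · exact absurd h' hmn
  · exact h'

theorem stmt3 {m n : ℕ} (hm : 1 ≤ m) (hn : 1 ≤ n) (G : Game m n) :
    ∃! d : Game m n × Game m n,
      IdInterest d.1 ∧ Normalized d.1 ∧
      IsZeroSumEquivAdd d.2 ∧
      G = d.1 + d.2 := by
  have hm0 : (0:ℝ) < m := by exact_mod_cast hm
  have hn0 : (0:ℝ) < n := by exact_mod_cast hn
  set S : Matrix (Fin m) (Fin n) ℝ := G.1 + G.2 with hS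
  set r : Fin m → ℝ := fun i => (∑ j, S i j) / n with hr
  set c : Fin n → ℝ := fun j => (∑ i, S i j) / m with hc
  set t : ℝ := (∑ i, ∑ j, S i j) / (m * n) with ht
  set C : Matrix (Fin m) (Fin n) ℝ := fun i j => (S i j - r i - c j + t) / 2 with hC
  -- basic sum facts
  have hsum_r : ∑ i, r i = (m:ℝ) * t := by
    rw [hr, ht]
    rw [← Finset.sum_div]
    field_simp
  have hsum_c : ∑ j, c j = (n:ℝ) * t := by
    rw [hc, ht]
    rw [← Finset.sum_div, Finset.sum_comm]
    field_simp
  have hCcol : ∀ j, ∑ i, C i j = 0 := by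
    intro j
    have : ∑ i, C i j = ((∑ i, S i j) - (∑ i, r i) - (m:ℝ) * c j + (m:ℝ) * t) / 2 := by
      rw [hC]
      simp only []
      rw [← Finset.sum_div]
      congr 1
      rw [Finset.sum_add_distrib, Finset.sum_sub_distrib, Finset.sum_sub_distrib,
        Finset.sum_const, Finset.sum_const, Finset.card_univ, Fintype.card_fin,
        nsmul_eq_mul, nsmul_eq_mul]
    rw [this, hsum_r]
    have hcj : (m:ℝ) * c j = ∑ i, S i j := by
      rw [hc]; field_simp
    rw [hcj]
    ring
  have hCrow : ∀ i, ∑ j, C i j = 0 := by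
    intro i
    have : ∑ j, C i j = ((∑ j, S i j) - (n:ℝ) * r i - (∑ j, c j) + (n:ℝ) * t) / 2 := by
      rw [hC]
      simp only []
      rw [← Finset.sum_div]
      congr 1
      rw [Finset.sum_add_distrib, Finset.sum_sub_distrib, Finset.sum_sub_distrib,
        Finset.sum_const, Finset.sum_const, Finset.card_univ, Fintype.card_fin,
        nsmul_eq_mul, nsmul_eq_mul]
    rw [this, hsum_c]
    have hri : (n:ℝ) * r i = ∑ j, S i j := by
      rw [hr]; field_simp
    rw [hri]
    ring
  -- the decomposition
  set I : Game m n := (C, C) with hI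
  set W : Game m n := (G.1 - C, G.2 - C) with hW
  have hkey : ∀ i j, (G.1 i j - C i j) + (G.2 i j - C i j) = (c j - t) + r i := by
    intro i j
    have : S i j = G.1 i j + G.2 i j := rfl
    rw [hC]
    simp only []
    rw [this]
    ring
  have hWz : IsZeroSumEquivAdd W := by
    refine ⟨(fun i j => G.1 i j - C i j - (c j - t), fun i j => -(G.1 i j - C i j - (c j - t))),
      (fun _ j => c j - t, fun i _ => r i), ?_, ?_, ?_⟩
    · show (fun i j => G.1 i j - C i j - (c j - t)) + (fun i j => -(G.1 i j - C i j - (c j - t))) = 0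
      ext i j
      simp [Matrix.add_apply]
    · exact ⟨fun j => c j - t, fun i => r i, fun i j => rfl, fun i j => rfl⟩
    · refine Prod.ext ?_ ?_
      · ext i j
        show G.1 i j - C i j = (G.1 i j - C i j - (c j - t)) + (c j - t)
        ring
      · ext i j
        show G.2 i j - C i j = -(G.1 i j - C i j - (c j - t)) + r i
        have := hkey i j
        linarith
  refine ⟨(I, W), ⟨rfl, ⟨hCcol, hCrow⟩, hWz, ?_⟩, ?_⟩
  · refine Prod.ext ?_ ?_
    · ext i j; simp [hI, hW, Matrix.add_apply]
    · ext i j; simp [hI, hW, Matrix.add_apply]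
  · rintro d ⟨hid, ⟨hncol, hnrow⟩, hzse, hGd⟩
    -- show d = (I, W)
    have hWGI : W = G - I := rfl
    have hd2 : d.2 = G - d.1 := by rw [hGd]; abel
    have hdiffeq : d.2 - W = ((C - d.1.1, C - d.1.2) : Game m n) := by
      have : d.2 - W = I - d.1 := by rw [hd2, hWGI]; abel
      rw [this]
      rfl
    have hdiff : IsZeroSumEquivAdd ((C - d.1.1, C - d.1.2) : Game m n) := by
      rw [← hdiffeq]
      exact zsea_sub hzse hWz
    have hd12 : d.1.2 = d.1.1 := hid.symm
    obtain ⟨Z, E, hZ, ⟨x, y, hx, hy⟩, hZE⟩ := hdiff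
    have hD0 : C - d.1.1 = 0 := by
      refine centered_eq_zero hm hn (C - d.1.1) ?_ ?_ x y ?_
      · intro j
        have : ∀ i, (C - d.1.1) i j = C i j - d.1.1 i j := fun i => rfl
        simp only [this]
        rw [Finset.sum_sub_distrib, hCcol j, hncol j, sub_zero]
      · intro i
        have : ∀ j, (C - d.1.1) i j = C i j - d.1.1 i j := fun j => rfl
        simp only [this]
        rw [Finset.sum_sub_distrib, hCrow i]
        have h0 : ∑ j, d.1.1 i j = 0 := by rw [← hd12]; exact hnrow i
        rw [h0, sub_zero]
      · intro i j
        have e1 := congrFun (congrFun (congrArg Prod.fst hZE) i) j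
        have e2 := congrFun (congrFun (congrArg Prod.snd hZE) i) j
        have e3 := congrFun (congrFun hZ i) j
        simp only [Prod.fst_add, Prod.snd_add, Matrix.add_apply, Pi.add_apply,
          Matrix.sub_apply, Pi.sub_apply, Matrix.zero_apply, hd12, hx i j, hy i j]
          at e1 e2 e3 ⊢
        linarith
    have hd11 : d.1.1 = C := by
      have := sub_eq_zero.mp hD0
      exact this.symm
    have hd1 : d.1 = I := by
      refine Prod.ext hd11 ?_
      rw [hd12, hd11]
    refine Prod.ext hd1 ?_
    show d.2 = W
    rw [hd2, hd1, hWGI]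
end

section
/- Every m×n bimatrix game G can be written in exactly one way as G = P + Z, where P is a sum of an identical interest game and a non-strategic game (a potential game) and Z is a normalized zero-sum game; that is, the space of m×n bimatrix games is the direct sum (𝓘+𝓔) ⊕ (𝓩∩𝓝). -/
open Matrix Filter

lemma aux_uniq {m n : ℕ} (hm : 1 ≤ m) (hn : 1 ≤ n)
    (P Z P' Z' : Game m n)
    (hP : IsPotentialGame P) (hZ : ZeroSum Z) (hN : Normalized Z)
    (hP' : IsPotentialGame P') (hZ' : ZeroSum Z') (hN' : Normalized Z')
    (hG : P + Z = P' + Z') : Z = Z' ∧ P = P' := by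
  have hm0 : (m : ℝ) ≠ 0 := Nat.cast_ne_zero.mpr (by omega)
  have hn0 : (n : ℝ) ≠ 0 := Nat.cast_ne_zero.mpr (by omega)
  obtain ⟨I, E, hI, ⟨x, y, hx, hy⟩, hPIE⟩ := hP
  obtain ⟨I', E', hI', ⟨x', y', hx', hy'⟩, hPIE'⟩ := hP'
  have hZ2 : Z.2 = -Z.1 := eq_neg_of_add_eq_zero_right hZ
  have hZ2' : Z'.2 = -Z'.1 := eq_neg_of_add_eq_zero_right hZ'
  -- pointwise equations
  have h1 : ∀ i j, I.1 i j + x j + Z.1 i j = I'.1 i j + x' j + Z'.1 i j := by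
    intro i j
    have := congrArg (fun g : Game m n => g.1 i j) hG
    simp only [Prod.fst_add, Matrix.add_apply, hPIE, hPIE'] at this ⊢
    rw [hx i j, hx' i j] at this
    linarith [this]
  have h2 : ∀ i j, I.1 i j + y i - Z.1 i j = I'.1 i j + y' i - Z'.1 i j := by
    intro i j
    have := congrArg (fun g : Game m n => g.2 i j) hG
    simp only [Prod.snd_add, Matrix.add_apply, hPIE, hPIE'] at this
    rw [hy i j, hy' i j, hZ2, hZ2'] at this
    have hIe := congrFun (congrFun hI i) j
    have hIe' := congrFun (congrFun hI' i) j
    simp only [Matrix.neg_apply] at this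
    rw [IdInterest] at hI hI'
    rw [hI, hI']
    linarith [this]
  set u : Fin n → ℝ := fun j => x' j - x j with hu
  set v : Fin m → ℝ := fun i => y' i - y i with hv
  have key : ∀ i j, 2 * (Z.1 i j - Z'.1 i j) = u j - v i := by
    intro i j
    have := h1 i j
    have := h2 i j
    simp only [hu, hv]
    linarith
  -- column sums of E vanish
  have hcol : ∀ j, ∑ i, (Z.1 i j - Z'.1 i j) = 0 := by
    intro j
    rw [Finset.sum_sub_distrib, hN.1 j, hN'.1 j, sub_zero]
  have hrow : ∀ i, ∑ j, (Z.1 i j - Z'.1 i j) = 0 := by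
    intro i
    have a1 := hN.2 i
    have a2 := hN'.2 i
    rw [hZ2] at a1; rw [hZ2'] at a2
    simp only [Matrix.neg_apply, Finset.sum_neg_distrib] at a1 a2
    rw [Finset.sum_sub_distrib]
    simp only [neg_eq_zero] at a1 a2
    rw [a1, a2, sub_zero]
  have hcu : ∀ j, (m : ℝ) * u j = ∑ i, v i := by
    intro j
    have := hcol j
    have h2 : ∑ i, 2 * (Z.1 i j - Z'.1 i j) = ∑ i, (u j - v i) := by
      exact Finset.sum_congr rfl fun i _ => key i j
    rw [← Finset.mul_sum] at h2
    rw [this] at h2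
    simp only [Finset.sum_sub_distrib, Finset.sum_const, Finset.card_univ,
      Fintype.card_fin, nsmul_eq_mul, mul_zero] at h2
    simp only [hu, hv, smul_eq_mul]
    linarith [h2]
  have hrv : ∀ i, (n : ℝ) * v i = ∑ j, u j := by
    intro i
    have := hrow i
    have h2 : ∑ j, 2 * (Z.1 i j - Z'.1 i j) = ∑ j, (u j - v i) := by
      exact Finset.sum_congr rfl fun j _ => key i j
    rw [← Finset.mul_sum] at h2
    rw [this] at h2
    simp only [Finset.sum_sub_distrib, Finset.sum_const, Finset.card_univ,
      Fintype.card_fin, nsmul_eq_mul, mul_zero] at h2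
    simp only [hu, hv, smul_eq_mul]
    linarith [h2]
  -- deduce u j = v i for all i j
  have huv : ∀ (i : Fin m) (j : Fin n), u j = v i := by
    intro i j
    have h3 : (n:ℝ) * ((m:ℝ) * u j) = (n:ℝ) * ∑ i, v i := by rw [hcu j]
    have h4 : ∑ i', (n:ℝ) * v i' = ∑ i', ∑ j', u j' :=
      Finset.sum_congr rfl fun i' _ => hrv i'
    have h5 : (n:ℝ) * ∑ i', v i' = (m:ℝ) * ∑ j', u j' := by
      rw [← Finset.mul_sum] at h4
      simpa [Finset.sum_const, Finset.card_univ, nsmul_eq_mul] using h4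
    have h6 : ∑ j', u j' = (n:ℝ) * u j := by
      have : ∀ j', u j' = u j := by
        intro j'
        have a := hcu j'
        have b := hcu j
        have hmm : (m:ℝ) * u j' = (m:ℝ) * u j := by rw [a, b]
        exact mul_left_cancel₀ hm0 hmm
      simp [this, Finset.sum_const, Finset.card_univ, nsmul_eq_mul]
    have h7 := hrv i
    rw [h6] at h7
    exact (mul_left_cancel₀ hn0 h7).symm
  have hE0 : Z.1 = Z'.1 := by
    funext i j
    have := key i j
    rw [← huv i j] at this
    simp at this
    linarith
  have hZZ : Z = Z' := by
    apply Prod.ext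
    · exact hE0
    · rw [hZ2, hZ2', hE0]
  refine ⟨hZZ, ?_⟩
  have := hG
  rw [hZZ] at this
  exact add_right_cancel this

theorem stmt4 {m n : ℕ} (hm : 1 ≤ m) (hn : 1 ≤ n) (G : Game m n) :
    ∃! d : Game m n × Game m n,
      IsPotentialGame d.1 ∧
      ZeroSum d.2 ∧ Normalized d.2 ∧
      G = d.1 + d.2 := by
  have hm0 : (m : ℝ) ≠ 0 := Nat.cast_ne_zero.mpr (by omega)
  have hn0 : (n : ℝ) ≠ 0 := Nat.cast_ne_zero.mpr (by omega)
  set M : Matrix (Fin m) (Fin n) ℝ := G.1 - G.2 with hM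
  set r : Fin m → ℝ := fun i => (∑ j, M i j) / n with hr
  set c : Fin n → ℝ := fun j => (∑ i, M i j) / m with hc
  set T : ℝ := ∑ i, ∑ j, M i j with hT
  set s : ℝ := T / (m * n) with hs
  set D : Matrix (Fin m) (Fin n) ℝ := fun i j => (M i j - r i - c j + s) / 2 with hD
  have hsumr : ∑ i, r i = T / n := by
    rw [hr, hT, ← Finset.sum_div]
  have hsumc : ∑ j, c j = T / m := by
    rw [hc, hT, ← Finset.sum_div, Finset.sum_comm]
  have hDcol : ∀ j, ∑ i, D i j = 0 := by
    intro j
    have e1 : ∑ i, D i j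
        = ((∑ i, M i j) - (∑ i, r i) - (m:ℝ) * c j + (m:ℝ) * s) / 2 := by
      rw [hD]
      rw [← Finset.sum_div]
      congr 1
      rw [Finset.sum_add_distrib, Finset.sum_sub_distrib, Finset.sum_sub_distrib]
      simp [Finset.sum_const, Finset.card_univ, mul_comm]
    rw [e1, hsumr]
    have e2 : (m:ℝ) * c j = ∑ i, M i j := by
      rw [hc]; field_simp
    have e3 : (m:ℝ) * s = T / n := by
      rw [hs]; field_simp
    rw [e2, e3]; ring
  have hDrow : ∀ i, ∑ j, D i j = 0 := by
    intro i
    have e1 : ∑ j, D i j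
        = ((∑ j, M i j) - (n:ℝ) * r i - (∑ j, c j) + (n:ℝ) * s) / 2 := by
      rw [hD]
      rw [← Finset.sum_div]
      congr 1
      rw [Finset.sum_add_distrib, Finset.sum_sub_distrib, Finset.sum_sub_distrib]
      simp [Finset.sum_const, Finset.card_univ, mul_comm]
    rw [e1, hsumc]
    have e2 : (n:ℝ) * r i = ∑ j, M i j := by
      rw [hr]; field_simp
    have e3 : (n:ℝ) * s = T / m := by
      rw [hs]; field_simp
    rw [e2, e3]; ring
  refine ⟨⟨(G.1 - D, G.2 + D), (D, -D)⟩, ⟨?_, ?_, ?_, ?_⟩, ?_⟩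
  · -- potential
    refine ⟨((fun i j => G.2 i j + D i j + r i), (fun i j => G.2 i j + D i j + r i)),
      ((fun i j => c j - s), (fun i j => -r i)), rfl,
      ⟨fun j => c j - s, fun i => -r i, fun i j => rfl, fun i j => rfl⟩, ?_⟩
    apply Prod.ext
    · funext i j
      simp only [Prod.fst_add, Matrix.add_apply, Matrix.sub_apply, Pi.add_apply]
      change _ = G.2 i j + D i j + r i + (c j - s)
      have hDij : D i j = ((G.1 i j - G.2 i j) - r i - c j + s) / 2 := by
        rw [hD]; simp [hM, Matrix.sub_apply]
      rw [hDij]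
      ring
    · funext i j
      simp only [Prod.snd_add, Matrix.add_apply, Pi.add_apply]
      change _ = G.2 i j + D i j + r i + -r i
      ring
  · show (D : Matrix (Fin m) (Fin n) ℝ) + (-D) = 0
    simp
  · exact ⟨fun j => hDcol j, fun i => by simpa [Matrix.neg_apply, Finset.sum_neg_distrib] using hDrow i⟩
  · apply Prod.ext
    · simp [Matrix.sub_apply]
    · funext i j
      simp [Matrix.add_apply]
  · rintro y ⟨hP, hZ, hN, hG⟩
    have hd2 := aux_uniq hm hn y.1 y.2 (G.1 - D, G.2 + D) (D, -D) hP hZ hN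
      ?_ ?_ ?_ ?_
    · apply Prod.ext
      · exact hd2.2
      · exact hd2.1
    · refine ⟨((fun i j => G.2 i j + D i j + r i), (fun i j => G.2 i j + D i j + r i)),
        ((fun i j => c j - s), (fun i j => -r i)), rfl,
        ⟨fun j => c j - s, fun i => -r i, fun i j => rfl, fun i j => rfl⟩, ?_⟩
      apply Prod.ext
      · funext i j
        simp only [Prod.fst_add, Matrix.add_apply, Matrix.sub_apply, Pi.add_apply]
        change _ = G.2 i j + D i j + r i + (c j - s)
        have hDij : D i j = ((G.1 i j - G.2 i j) - r i - c j + s) / 2 := by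
          rw [hD]; simp [hM, Matrix.sub_apply]
        rw [hDij]
        ring
      · funext i j
        simp only [Prod.snd_add, Matrix.add_apply, Pi.add_apply]
        change _ = G.2 i j + D i j + r i + -r i
        ring
    · show (D : Matrix (Fin m) (Fin n) ℝ) + (-D) = 0
      simp
    · exact ⟨fun j => hDcol j, fun i => by simpa [Matrix.neg_apply, Finset.sum_neg_distrib] using hDrow i⟩
    · rw [← hG]
      apply Prod.ext
      · simp [Matrix.sub_apply]
      · funext i j
        simp [Matrix.add_apply]
end

section
/- Every m×n bimatrix game G can be written in exactly one way as G = P + H + E, where P is a normalized potential game, H is a normalized harmonic game, and E is a non-strategic game; that is, the space of m×n bimatrix games is the direct sum 𝓟 ⊕ 𝓗 ⊕ 𝓔. -/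
open Matrix Filter

-- closure under subtraction
lemma nonstrategic_sub {m n : ℕ} {E E' : Game m n} (h : NonStrategic E)
    (h' : NonStrategic E') : NonStrategic (E - E') := by
  obtain ⟨x, y, hx, hy⟩ := h
  obtain ⟨x', y', hx', hy'⟩ := h'
  refine ⟨x - x', y - y', fun i j => ?_, fun i j => ?_⟩ <;>
    simp [Prod.fst_sub, Prod.snd_sub, Matrix.sub_apply, hx i j, hx' i j, hy i j, hy' i j]

lemma normpotential_sub {m n : ℕ} {P P' : Game m n} (h : NormPotential P)
    (h' : NormPotential P') : NormPotential (P - P') := by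
  obtain ⟨⟨hc, hr⟩, I, E, hI, hE, hPe⟩ := h
  obtain ⟨⟨hc', hr'⟩, I', E', hI', hE', hPe'⟩ := h'
  refine ⟨⟨fun j => ?_, fun i => ?_⟩, I - I', E - E', ?_, nonstrategic_sub hE hE', ?_⟩
  · simp [Prod.fst_sub, Matrix.sub_apply, Finset.sum_sub_distrib, hc j, hc' j]
  · simp [Prod.snd_sub, Matrix.sub_apply, Finset.sum_sub_distrib, hr i, hr' i]
  · unfold IdInterest at *
    simp [Prod.fst_sub, Prod.snd_sub, hI, hI']
  · rw [hPe, hPe']; abel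

lemma normharmonic_sub {m n : ℕ} {H H' : Game m n} (h : NormHarmonic m n H)
    (h' : NormHarmonic m n H') : NormHarmonic m n (H - H') := by
  obtain ⟨⟨hc, hr⟩, hl⟩ := h
  obtain ⟨⟨hc', hr'⟩, hl'⟩ := h'
  refine ⟨⟨fun j => ?_, fun i => ?_⟩, ?_⟩
  · simp [Prod.fst_sub, Matrix.sub_apply, Finset.sum_sub_distrib, hc j, hc' j]
  · simp [Prod.snd_sub, Matrix.sub_apply, Finset.sum_sub_distrib, hr i, hr' i]
  · have : ((m : ℝ) • H.1 + (n : ℝ) • H.2) - ((m : ℝ) • H'.1 + (n : ℝ) • H'.2) = 0 := by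
      rw [hl, hl', sub_zero]
    rw [← this]
    simp [Prod.fst_sub, Prod.snd_sub, smul_sub]
    abel

lemma decomp_zero {m n : ℕ} (hm : 1 ≤ m) (hn : 1 ≤ n) {P H E : Game m n}
    (hP : NormPotential P) (hH : NormHarmonic m n H) (hE : NonStrategic E)
    (hsum : P + H + E = 0) : P = 0 ∧ H = 0 ∧ E = 0 := by
  have hm0 : (0 : ℝ) < m := by exact_mod_cast Nat.lt_of_lt_of_le Nat.zero_lt_one hm
  have hn0 : (0 : ℝ) < n := by exact_mod_cast Nat.lt_of_lt_of_le Nat.zero_lt_one hn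
  have hmn0 : (0 : ℝ) < (m : ℝ) + n := by linarith
  obtain ⟨⟨hPc, hPr⟩, I, E', hI, ⟨x', y', hx', hy'⟩, hPeq⟩ := hP
  obtain ⟨⟨hHc, hHr⟩, hHlin⟩ := hH
  obtain ⟨x, y, hx, hy⟩ := hE
  have h1 : ∀ i j, P.1 i j + H.1 i j + E.1 i j = 0 := by
    intro i j
    have := congrArg (fun G : Game m n => G.1 i j) hsum
    simpa [Matrix.add_apply] using this
  have h2 : ∀ i j, P.2 i j + H.2 i j + E.2 i j = 0 := by
    intro i j
    have := congrArg (fun G : Game m n => G.2 i j) hsum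
    simpa [Matrix.add_apply] using this
  -- E = 0
  have hx0 : ∀ j, x j = 0 := by
    intro j
    have hs : ∑ i, (P.1 i j + H.1 i j + E.1 i j) = 0 := by simp [h1]
    rw [Finset.sum_add_distrib, Finset.sum_add_distrib, hPc j, hHc j] at hs
    have : ∑ i : Fin m, E.1 i j = (m : ℝ) * x j := by
      simp [hx, Finset.sum_const, mul_comm]
    rw [this, zero_add, zero_add] at hs
    rcases mul_eq_zero.mp hs with h | h
    · exact absurd h hm0.ne'
    · exact h
  have hy0 : ∀ i, y i = 0 := by
    intro i
    have hs : ∑ j, (P.2 i j + H.2 i j + E.2 i j) = 0 := by simp [h2]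
    rw [Finset.sum_add_distrib, Finset.sum_add_distrib, hPr i, hHr i] at hs
    have : ∑ j : Fin n, E.2 i j = (n : ℝ) * y i := by
      simp [hy, Finset.sum_const, mul_comm]
    rw [this, zero_add, zero_add] at hs
    rcases mul_eq_zero.mp hs with h | h
    · exact absurd h hn0.ne'
    · exact h
  have hE0 : E = 0 := by
    refine Prod.ext ?_ ?_ <;> ext i j
    · simp [hx i j, hx0 j]
    · simp [hy i j, hy0 i]
  -- P + H = 0, so H = -P
  have hPH : H = -P := by
    have := hsum
    rw [hE0, add_zero] at this
    linear_combination (norm := abel) this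
  -- linear relation for P
  have hPlin : ∀ i j, (m : ℝ) * P.1 i j + (n : ℝ) * P.2 i j = 0 := by
    intro i j
    have := congrArg (fun M : Matrix (Fin m) (Fin n) ℝ => M i j) hHlin
    simp only [Matrix.add_apply, Matrix.smul_apply, smul_eq_mul, Matrix.zero_apply, hPH,
      Prod.fst_neg, Prod.snd_neg, Matrix.neg_apply] at this
    linarith
  -- entries of P.1 and P.2
  have e1 : ∀ i j, P.1 i j = I.1 i j + x' j := by
    intro i j
    have := congrArg (fun G : Game m n => G.1 i j) hPeq
    simpa [Matrix.add_apply, hx' i j] using this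
  have hIe : ∀ i j, I.2 i j = I.1 i j := fun i j => (congrFun (congrFun hI i) j).symm
  have e2 : ∀ i j, P.2 i j = I.1 i j + y' i := by
    intro i j
    have := congrArg (fun G : Game m n => G.2 i j) hPeq
    simpa [Matrix.add_apply, hy' i j, hIe i j] using this
  have key : ∀ i j, ((m : ℝ) + n) * P.1 i j = (n : ℝ) * (x' j - y' i) := by
    intro i j
    linear_combination hPlin i j + (n : ℝ) * e1 i j - (n : ℝ) * e2 i j
  -- row sums of P.1 vanish
  have hP1row : ∀ i, ∑ j, P.1 i j = 0 := by
    intro i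
    have : (m : ℝ) * ∑ j, P.1 i j = 0 := by
      rw [Finset.mul_sum]
      calc ∑ j, (m : ℝ) * P.1 i j = ∑ j, (-(n : ℝ) * P.2 i j) := by
            refine Finset.sum_congr rfl fun j _ => ?_
            have := hPlin i j; linarith
        _ = -(n : ℝ) * ∑ j, P.2 i j := by rw [Finset.mul_sum]
        _ = 0 := by rw [hPr i, mul_zero]
    exact by
      rcases mul_eq_zero.mp this with h | h
      · exact absurd h hm0.ne'
      · exact h
  -- x' is constant, y' is constant
  have hxc : ∀ j, (m : ℝ) * x' j = ∑ i, y' i := by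
    intro j
    have hs : ∑ i, ((m : ℝ) + n) * P.1 i j = 0 := by
      rw [← Finset.mul_sum, hPc j, mul_zero]
    rw [Finset.sum_congr rfl (fun i _ => key i j)] at hs
    have : ∑ i : Fin m, (n : ℝ) * (x' j - y' i)
        = (n : ℝ) * ((m : ℝ) * x' j - ∑ i, y' i) := by
      rw [← Finset.mul_sum, Finset.sum_sub_distrib, Finset.sum_const]
      simp [mul_comm]
    rw [this] at hs
    rcases mul_eq_zero.mp hs with h | h
    · exact absurd h hn0.ne'
    · linarith
  have hyc : ∀ i, (n : ℝ) * y' i = ∑ j, x' j := by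
    intro i
    have hs : ∑ j, ((m : ℝ) + n) * P.1 i j = 0 := by
      rw [← Finset.mul_sum, hP1row i, mul_zero]
    rw [Finset.sum_congr rfl (fun j _ => key i j)] at hs
    have : ∑ j : Fin n, (n : ℝ) * (x' j - y' i)
        = (n : ℝ) * ((∑ j, x' j) - (n : ℝ) * y' i) := by
      rw [← Finset.mul_sum, Finset.sum_sub_distrib, Finset.sum_const]
      simp [mul_comm]
    rw [this] at hs
    rcases mul_eq_zero.mp hs with h | h
    · exact absurd h hn0.ne'
    · linarith
  -- conclude x' j - y' i = 0
  have hdiff : ∀ (i : Fin m) (j : Fin n), x' j - y' i = 0 := by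
    intro i j
    have hSx : (m : ℝ) * ∑ j, x' j = (n : ℝ) * ∑ i, y' i := by
      calc (m : ℝ) * ∑ j, x' j = ∑ j : Fin n, (m : ℝ) * x' j := by rw [Finset.mul_sum]
        _ = ∑ j : Fin n, ∑ i, y' i := Finset.sum_congr rfl fun j _ => hxc j
        _ = (n : ℝ) * ∑ i, y' i := by rw [Finset.sum_const]; simp [mul_comm]
    have h1 := hxc j
    have h2 := hyc i
    -- m*x' j = Sy, n*y' i = Sx, m*Sx = n*Sy
    have : (m : ℝ) * (n : ℝ) * (x' j - y' i) = 0 := by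
      linear_combination (n:ℝ) * h1 - (m:ℝ) * h2 - hSx
    rcases mul_eq_zero.mp this with h | h
    · exact absurd h (mul_pos hm0 hn0).ne'
    · exact h
  have hP10 : P.1 = 0 := by
    ext i j
    have := key i j
    rw [hdiff i j, mul_zero] at this
    rcases mul_eq_zero.mp this with h | h
    · exact absurd h hmn0.ne'
    · simpa using h
  have hP20 : P.2 = 0 := by
    ext i j
    have := hPlin i j
    rw [hP10] at this
    simp only [Matrix.zero_apply, mul_zero, zero_add] at this
    rcases mul_eq_zero.mp this with h | h
    · exact absurd h hn0.ne'
    · simpa using h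
  have hP0 : P = 0 := Prod.ext hP10 hP20
  exact ⟨hP0, by rw [hPH, hP0, neg_zero], hE0⟩

noncomputable def Umat {m n : ℕ} (G : Game m n) : Matrix (Fin m) (Fin n) ℝ :=
  Matrix.of fun i j =>
    (G.1 i j - (∑ k, G.1 k j) / m) - (G.2 i j - (∑ k, G.2 i k) / n)

noncomputable def Cmat {m n : ℕ} (G : Game m n) : Matrix (Fin m) (Fin n) ℝ :=
  Matrix.of fun i j =>
    ((n : ℝ) / ((m : ℝ) + n)) *
      (Umat G i j - (∑ k, Umat G i k) / n - (∑ k, Umat G k j) / m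
        + (∑ k, ∑ l, Umat G k l) / ((m : ℝ) * n))

lemma Cmat_col {m n : ℕ} (hm : 1 ≤ m) (hn : 1 ≤ n) (G : Game m n) (j : Fin n) :
    ∑ i, Cmat G i j = 0 := by
  have hm0 : ((m : ℝ)) ≠ 0 := by
    have : (0:ℝ) < m := by exact_mod_cast Nat.lt_of_lt_of_le Nat.zero_lt_one hm
    exact this.ne'
  have hn0 : ((n : ℝ)) ≠ 0 := by
    have : (0:ℝ) < n := by exact_mod_cast Nat.lt_of_lt_of_le Nat.zero_lt_one hn
    exact this.ne'
  simp only [Cmat, Matrix.of_apply]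
  rw [← Finset.mul_sum]
  have h : ∑ i, (Umat G i j - (∑ k, Umat G i k) / (n:ℝ) - (∑ k, Umat G k j) / (m:ℝ)
      + (∑ k, ∑ l, Umat G k l) / ((m : ℝ) * n)) = 0 := by
    rw [Finset.sum_add_distrib, Finset.sum_sub_distrib, Finset.sum_sub_distrib,
      Finset.sum_const, Finset.sum_const, ← Finset.sum_div]
    simp only [Finset.card_univ, Fintype.card_fin, nsmul_eq_mul]
    field_simp
    ring
  rw [h, mul_zero]

lemma Cmat_row {m n : ℕ} (hm : 1 ≤ m) (hn : 1 ≤ n) (G : Game m n) (i : Fin m) :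
    ∑ j, Cmat G i j = 0 := by
  have hm0 : ((m : ℝ)) ≠ 0 := by
    have : (0:ℝ) < m := by exact_mod_cast Nat.lt_of_lt_of_le Nat.zero_lt_one hm
    exact this.ne'
  have hn0 : ((n : ℝ)) ≠ 0 := by
    have : (0:ℝ) < n := by exact_mod_cast Nat.lt_of_lt_of_le Nat.zero_lt_one hn
    exact this.ne'
  simp only [Cmat, Matrix.of_apply]
  rw [← Finset.mul_sum]
  have h : ∑ j, (Umat G i j - (∑ k, Umat G i k) / (n:ℝ) - (∑ k, Umat G k j) / (m:ℝ)
      + (∑ k, ∑ l, Umat G k l) / ((m : ℝ) * n)) = 0 := by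
    rw [Finset.sum_add_distrib, Finset.sum_sub_distrib, Finset.sum_sub_distrib,
      Finset.sum_const, Finset.sum_const, ← Finset.sum_div]
    simp only [Finset.card_univ, Fintype.card_fin, nsmul_eq_mul]
    rw [Finset.sum_comm (f := fun k j => Umat G k j)]
    field_simp
    ring
  rw [h, mul_zero]

lemma decomp_exists {m n : ℕ} (hm : 1 ≤ m) (hn : 1 ≤ n) (G : Game m n) :
    ∃ d : Game m n × Game m n × Game m n,
      NormPotential d.1 ∧
      NormHarmonic m n d.2.1 ∧
      NonStrategic d.2.2 ∧
      G = d.1 + d.2.1 + d.2.2 := by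
  have hm0 : (0:ℝ) < m := by exact_mod_cast Nat.lt_of_lt_of_le Nat.zero_lt_one hm
  have hn0 : (0:ℝ) < n := by exact_mod_cast Nat.lt_of_lt_of_le Nat.zero_lt_one hn
  have hmn0 : (0:ℝ) < (m:ℝ) + n := by linarith
  refine ⟨⟨⟨Matrix.of fun i j => G.1 i j - (∑ k, G.1 k j) / m - Cmat G i j,
            Matrix.of fun i j => G.2 i j - (∑ k, G.2 i k) / n + ((m:ℝ)/n) * Cmat G i j⟩,
           ⟨Cmat G, Matrix.of fun i j => -((m:ℝ)/n) * Cmat G i j⟩,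
           ⟨Matrix.of fun i j => (∑ k, G.1 k j) / m,
            Matrix.of fun i j => (∑ k, G.2 i k) / n⟩⟩, ?_, ?_, ?_, ?_⟩
  · -- NormPotential
    constructor
    · constructor
      · intro j
        simp only [Matrix.of_apply]
        rw [Finset.sum_sub_distrib, Finset.sum_sub_distrib, Finset.sum_const,
          Cmat_col hm hn G j]
        simp only [Finset.card_univ, Fintype.card_fin, nsmul_eq_mul]
        field_simp
        ring
      · intro i
        simp only [Matrix.of_apply]
        rw [Finset.sum_add_distrib, Finset.sum_sub_distrib, Finset.sum_const,
          ← Finset.mul_sum, Cmat_row hm hn G i]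
        simp only [Finset.card_univ, Fintype.card_fin, nsmul_eq_mul]
        field_simp
        ring
    · -- IsPotentialGame
      refine ⟨⟨Matrix.of fun i j => (G.2 i j - (∑ k, G.2 i k) / n + ((m:ℝ)/n) * Cmat G i j)
                + (∑ k, Umat G i k) / n,
              Matrix.of fun i j => (G.2 i j - (∑ k, G.2 i k) / n + ((m:ℝ)/n) * Cmat G i j)
                + (∑ k, Umat G i k) / n⟩,
             ⟨Matrix.of fun i j => (∑ k, Umat G k j) / m - (∑ k, ∑ l, Umat G k l) / ((m:ℝ)*n),
              Matrix.of fun i j => -((∑ k, Umat G i k) / n)⟩,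
             rfl,
             ⟨fun j => (∑ k, Umat G k j) / m - (∑ k, ∑ l, Umat G k l) / ((m:ℝ)*n),
              fun i => -((∑ k, Umat G i k) / n), fun i j => rfl, fun i j => rfl⟩, ?_⟩
      refine Prod.ext ?_ ?_ <;> ext i j <;>
        simp only [Matrix.add_apply, Matrix.of_apply, Prod.fst_add, Prod.snd_add]
      · -- key pointwise identity
        simp only [Cmat, Umat, Matrix.of_apply]
        field_simp
        ring
      · ring
  · -- NormHarmonic
    refine ⟨⟨fun j => Cmat_col hm hn G j, fun i => ?_⟩, ?_⟩
    · simp only [Matrix.of_apply]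
      rw [← Finset.mul_sum, Cmat_row hm hn G i, mul_zero]
    · ext i j
      simp only [Matrix.add_apply, Matrix.smul_apply, Matrix.of_apply, smul_eq_mul,
        Matrix.zero_apply]
      field_simp
      ring
  · exact ⟨fun j => (∑ k, G.1 k j) / m, fun i => (∑ k, G.2 i k) / n,
      fun i j => rfl, fun i j => rfl⟩
  · refine Prod.ext ?_ ?_ <;> ext i j <;>
      simp only [Prod.fst_add, Prod.snd_add, Matrix.add_apply, Matrix.of_apply] <;> ring

theorem stmt5 {m n : ℕ} (hm : 1 ≤ m) (hn : 1 ≤ n) (G : Game m n) :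
    ∃! d : Game m n × Game m n × Game m n,
      NormPotential d.1 ∧
      NormHarmonic m n d.2.1 ∧
      NonStrategic d.2.2 ∧
      G = d.1 + d.2.1 + d.2.2 := by
  obtain ⟨d, hd⟩ := decomp_exists hm hn G
  refine ⟨d, hd, fun d' hd' => ?_⟩
  obtain ⟨hP, hH, hE, hG⟩ := hd
  obtain ⟨hP', hH', hE', hG'⟩ := hd'
  have hsum : (d'.1 - d.1) + (d'.2.1 - d.2.1) + (d'.2.2 - d.2.2) = 0 := by
    have h : d'.1 + d'.2.1 + d'.2.2 = d.1 + d.2.1 + d.2.2 := hG'.symm.trans hG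
    linear_combination (norm := abel) h
  obtain ⟨h1, h2, h3⟩ := decomp_zero hm hn (normpotential_sub hP' hP)
    (normharmonic_sub hH' hH) (nonstrategic_sub hE' hE) hsum
  exact Prod.ext (sub_eq_zero.mp h1) (Prod.ext (sub_eq_zero.mp h2) (sub_eq_zero.mp h3))
end

section
/- Let G be an m×n bimatrix game that is strategically equivalent to a zero-sum game or strategically equivalent to an identical interest game, and let B be a zero-sum equivalent potential game (B ∈ (𝓘+𝓔)∩(𝓩+𝓔)). Then G + B is strategically equivalent to a zero-sum game or strategically equivalent to an identical interest game. -/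
open Matrix Filter

theorem stmt6 {m n : ℕ} (hm : 1 ≤ m) (hn : 1 ≤ n) (G B : Game m n)
    (hG : StratEquivZeroSum G ∨ StratEquivIdInterest G) (hB : IsZSEP B) :
    StratEquivZeroSum (G + B) ∨ StratEquivIdInterest (G + B) := by
  obtain ⟨f, g, f', g', hB1, hB2⟩ :
      ∃ (f : Fin m → ℝ) (g : Fin n → ℝ) (f' : Fin m → ℝ) (g' : Fin n → ℝ), (∀ i j, B.1 i j = f i + g j) ∧ (∀ i j, B.2 i j = f' i + g' j) := by
    obtain ⟨⟨I, E1, hI, ⟨x, y, hx, hy⟩, hBIE⟩, ⟨Z, E2, hZ, ⟨x', y', hx', hy'⟩, hBZE⟩⟩ := hB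
    refine ⟨fun i => (y' i - y i) / 2, fun j => (x' j + x j) / 2,
            fun i => (y' i + y i) / 2, fun j => (x' j - x j) / 2, ?_, ?_⟩ <;> intro i j <;>
    · have h1 : B.1 i j = I.1 i j + x j := by
        rw [hBIE]; simp [Matrix.add_apply, hx]
      have h2 : B.2 i j = I.1 i j + y i := by
        rw [hBIE, hI]; simp [Matrix.add_apply, hy]
      have hz : Z.1 i j + Z.2 i j = 0 := by
        have := congrFun (congrFun hZ i) j
        simpa [Matrix.add_apply] using this
      have hsum : B.1 i j + B.2 i j = x' j + y' i := by
        rw [hBZE]; simp [Matrix.add_apply, hx', hy']; linarith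
      linarith
  rcases hG with ⟨Z, hZ, α, β, hα, hβ, E, ⟨x0, y0, hx0, hy0⟩, h1, h2⟩ |
    ⟨I, hI, α, β, hα, hβ, E, ⟨x0, y0, hx0, hy0⟩, h1, h2⟩
  · refine Or.inl ⟨(α • (G + B).1 + Matrix.of fun i j => x0 j - α * g j - β * g' j,
        β • (G + B).2 + Matrix.of fun i j => y0 i - β * f' i - α * f i), ?_, α, β, hα, hβ,
        (Matrix.of fun i j => x0 j - α * g j - β * g' j,
         Matrix.of fun i j => y0 i - β * f' i - α * f i),
        ⟨fun j => x0 j - α * g j - β * g' j, fun i => y0 i - β * f' i - α * f i,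
          fun i j => rfl, fun i j => rfl⟩, rfl, rfl⟩
    ext i j
    have ha := congrFun (congrFun h1 i) j
    have hb := congrFun (congrFun h2 i) j
    have hz := congrFun (congrFun hZ i) j
    simp only [Matrix.add_apply, Matrix.smul_apply, Matrix.zero_apply, Matrix.of_apply,
      smul_eq_mul, hx0, hy0, Prod.fst_add, Prod.snd_add] at ha hb hz ⊢
    rw [hB1, hB2]
    linear_combination hz - ha - hb
  · refine Or.inr ⟨(α • (G + B).1 + Matrix.of fun i j => x0 j - α * g j + β * g' j,
        β • (G + B).2 + Matrix.of fun i j => y0 i - β * f' i + α * f i), ?_, α, β, hα, hβ,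
        (Matrix.of fun i j => x0 j - α * g j + β * g' j,
         Matrix.of fun i j => y0 i - β * f' i + α * f i),
        ⟨fun j => x0 j - α * g j + β * g' j, fun i => y0 i - β * f' i + α * f i,
          fun i j => rfl, fun i j => rfl⟩, rfl, rfl⟩
    ext i j
    have ha := congrFun (congrFun h1 i) j
    have hb := congrFun (congrFun h2 i) j
    have hi := congrFun (congrFun hI i) j
    simp only [Matrix.add_apply, Matrix.smul_apply, Matrix.of_apply,
      smul_eq_mul, hx0, hy0, Prod.fst_add, Prod.snd_add] at ha hb hi ⊢
    rw [hB1, hB2]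
    linear_combination hi - ha + hb
end

section
/- Let G be an m×n bimatrix game that is strategically equivalent to a zero-sum game or strategically equivalent to an identical interest game, and let G = P + H + E be its Hodge decomposition, where P is a normalized potential game, H is a normalized harmonic game, and E is a non-strategic game. Then for every λ ∈ ℝ, the game λP + (1−λ)H is strategically equivalent to a zero-sum game, or strategically equivalent to an identical interest game, or at least one of its two payoff matrices M satisfies M_{ij} = x_i + y_j for some x ∈ ℝ^m, y ∈ ℝ^n. -/
open Matrix Filter

lemma key {m n : ℕ} (K : Game m n) (C : Matrix (Fin m) (Fin n) ℝ)
    (s t : ℝ) (f1 f2 : Fin m → ℝ) (g1 g2 : Fin n → ℝ)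
    (h1 : ∀ i j, K.1 i j = s * C i j + f1 i + g1 j)
    (h2 : ∀ i j, K.2 i j = t * C i j + f2 i + g2 j) :
    StratEquivZeroSum K ∨ StratEquivIdInterest K ∨ InD K := by
  rcases eq_or_ne s 0 with hs | hs
  · exact Or.inr (Or.inr (Or.inl ⟨f1, g1, fun i j => by rw [h1, hs]; ring⟩))
  rcases eq_or_ne t 0 with ht | ht
  · exact Or.inr (Or.inr (Or.inr ⟨f2, g2, fun i j => by rw [h2, ht]; ring⟩))
  set M : Matrix (Fin m) (Fin n) ℝ :=
    Matrix.of fun i j => s * C i j + f1 i + (s / t) * g2 j with hM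
  rcases lt_trichotomy (s / t) 0 with hst | hst | hst
  · refine Or.inl ⟨(M, -M), ?_, 1, -(s / t), one_pos, by linarith,
      (Matrix.of fun _ j => (s / t) * g2 j - g1 j,
       Matrix.of fun i _ => -f1 i + (s / t) * f2 i),
      ⟨_, _, fun _ _ => rfl, fun _ _ => rfl⟩, ?_, ?_⟩
    · show M + -M = 0
      simp
    · ext i j
      show M i j = (1 : ℝ) • K.1 i j + _
      simp [hM, h1 i j]
    · ext i j
      show (-M) i j = (-(s / t)) • K.2 i j + _
      simp [hM, h2 i j, smul_eq_mul]
      field_simp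
      ring
  · exact absurd hst (div_ne_zero hs ht)
  · refine Or.inr (Or.inl ⟨(M, M), rfl, 1, s / t, one_pos, hst,
      (Matrix.of fun _ j => (s / t) * g2 j - g1 j,
       Matrix.of fun i _ => f1 i - (s / t) * f2 i),
      ⟨_, _, fun _ _ => rfl, fun _ _ => rfl⟩, ?_, ?_⟩)
    · ext i j
      show M i j = (1 : ℝ) • K.1 i j + _
      simp [hM, h1 i j]
    · ext i j
      show M i j = (s / t) • K.2 i j + _
      simp [hM, h2 i j, smul_eq_mul]
      field_simp
      ring

theorem stmt7 {m n : ℕ} (hm : 1 ≤ m) (hn : 1 ≤ n) (G P H E : Game m n)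
    (hG : StratEquivZeroSum G ∨ StratEquivIdInterest G)
    (hP : NormPotential P) (hH : NormHarmonic m n H) (hE : NonStrategic E)
    (hdec : G = P + H + E) (lam : ℝ) :
    StratEquivZeroSum (lam • P + (1 - lam) • H) ∨
    StratEquivIdInterest (lam • P + (1 - lam) • H) ∨
    InD (lam • P + (1 - lam) • H) := by
  -- notation
  have hn0 : ((n : ℕ) : ℝ) ≠ 0 := by
    have : (0:ℝ) < n := by exact_mod_cast hn
    linarith
  have hmn0 : ((m : ℕ) : ℝ) + n ≠ 0 := by
    have h1 : (0:ℝ) < m := by exact_mod_cast hm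
    have h2 : (0:ℝ) < n := by exact_mod_cast hn
    linarith
  -- extract common-matrix representation of G
  obtain ⟨C, a, b, y1, x2, hCG1, hCG2⟩ :
      ∃ (C : Matrix (Fin m) (Fin n) ℝ) (a b : ℝ) (y1 : Fin n → ℝ) (x2 : Fin m → ℝ),
        (∀ i j, G.1 i j = a * C i j + y1 j) ∧ (∀ i j, G.2 i j = b * C i j + x2 i) := by
    rcases hG with ⟨Z, hZ, α, β, hα, hβ, E0, ⟨x, y, hx, hy⟩, h1, h2⟩ |
        ⟨I, hI, α, β, hα, hβ, E0, ⟨x, y, hx, hy⟩, h1, h2⟩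
    · refine ⟨Z.1, α⁻¹, -β⁻¹, fun j => -(α⁻¹ * x j), fun i => -(β⁻¹ * y i), ?_, ?_⟩
      · intro i j
        have e1 := congrFun (congrFun h1 i) j
        simp only [Matrix.add_apply, Matrix.smul_apply, smul_eq_mul, hx] at e1
        rw [e1]
        field_simp
        ring
      · intro i j
        have e2 := congrFun (congrFun h2 i) j
        have ez := congrFun (congrFun hZ i) j
        simp only [Matrix.add_apply, Matrix.smul_apply, smul_eq_mul, hy,
          Matrix.zero_apply] at e2 ez
        have hZ1 : Z.1 i j = -(β * G.2 i j) - y i := by linarith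
        rw [hZ1]
        field_simp
        ring
    · refine ⟨I.1, α⁻¹, β⁻¹, fun j => -(α⁻¹ * x j), fun i => -(β⁻¹ * y i), ?_, ?_⟩
      · intro i j
        have e1 := congrFun (congrFun h1 i) j
        simp only [Matrix.add_apply, Matrix.smul_apply, smul_eq_mul, hx] at e1
        rw [e1]
        field_simp
        ring
      · intro i j
        have e2 := congrFun (congrFun h2 i) j
        simp only [Matrix.add_apply, Matrix.smul_apply, smul_eq_mul, hy] at e2
        rw [show I.1 = I.2 from hI, e2]
        field_simp
        ring
  obtain ⟨e1v, e2v, hE1, hE2⟩ := hE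
  obtain ⟨IP, EP, hIP, ⟨u, v, hu, hv⟩, hPsum⟩ := hP.2
  -- pointwise facts
  have hA : ∀ i j, G.1 i j = P.1 i j + H.1 i j + E.1 i j := by
    intro i j; rw [hdec]
    simp [Matrix.add_apply]
  have hB : ∀ i j, G.2 i j = P.2 i j + H.2 i j + E.2 i j := by
    intro i j; rw [hdec]
    simp [Matrix.add_apply]
  have hD : ∀ i j, P.1 i j - P.2 i j = u j - v i := by
    intro i j; rw [hPsum]
    simp only [Prod.fst_add, Prod.snd_add, Matrix.add_apply, hu, hv]
    rw [show IP.1 = IP.2 from hIP]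
    ring
  have hC' : ∀ i j, (m : ℝ) * H.1 i j + (n : ℝ) * H.2 i j = 0 := by
    intro i j
    have := congrFun (congrFun hH.2 i) j
    simpa [Matrix.add_apply, Matrix.smul_apply, smul_eq_mul] using this
  -- explicit form of H.1
  have hH1' : ∀ i j, ((m : ℝ) + n) * H.1 i j =
      n * (G.1 i j - E.1 i j - G.2 i j + E.2 i j - u j + v i) := by
    intro i j
    linear_combination hC' i j - (n : ℝ) * hA i j + (n : ℝ) * hB i j - (n : ℝ) * hD i j
  have hH1e : ∀ i j, H.1 i j = ((n : ℝ) / ((m : ℝ) + n)) *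
      ((a - b) * C i j + (y1 j - e1v j - u j) + (-(x2 i) + e2v i + v i)) := by
    intro i j
    have h := hH1' i j
    rw [hCG1 i j, hCG2 i j, hE1 i j, hE2 i j] at h
    field_simp
    linear_combination h
  have hH2e : ∀ i j, H.2 i j = (-((m : ℝ) / ((m : ℝ) + n))) *
      ((a - b) * C i j + (y1 j - e1v j - u j) + (-(x2 i) + e2v i + v i)) := by
    intro i j
    refine mul_left_cancel₀ hn0 ?_
    linear_combination hC' i j - (m : ℝ) * hH1e i j
  have hP1e : ∀ i j, P.1 i j = a * C i j + y1 j - e1v j - H.1 i j := by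
    intro i j
    have h := hA i j
    rw [hCG1 i j, hE1 i j] at h
    linarith [h]
  have hP2e : ∀ i j, P.2 i j = b * C i j + x2 i - e2v i - H.2 i j := by
    intro i j
    have h := hB i j
    rw [hCG2 i j, hE2 i j] at h
    linarith [h]
  -- apply key lemma
  refine key _ C
    (lam * a + (1 - 2 * lam) * ((n : ℝ) / ((m : ℝ) + n)) * (a - b))
    (lam * b + (1 - 2 * lam) * (-((m : ℝ) / ((m : ℝ) + n))) * (a - b))
    (fun i => (1 - 2 * lam) * ((n : ℝ) / ((m : ℝ) + n)) * (-(x2 i) + e2v i + v i))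
    (fun i => lam * (x2 i - e2v i) +
      (1 - 2 * lam) * (-((m : ℝ) / ((m : ℝ) + n))) * (-(x2 i) + e2v i + v i))
    (fun j => lam * (y1 j - e1v j) +
      (1 - 2 * lam) * ((n : ℝ) / ((m : ℝ) + n)) * (y1 j - e1v j - u j))
    (fun j => (1 - 2 * lam) * (-((m : ℝ) / ((m : ℝ) + n))) * (y1 j - e1v j - u j))
    ?_ ?_
  · intro i j
    have hK : (lam • P + (1 - lam) • H).1 i j = lam * P.1 i j + (1 - lam) * H.1 i j := by
      simp [Matrix.add_apply, Matrix.smul_apply, smul_eq_mul]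
    rw [hK]
    linear_combination lam * hP1e i j + (1 - 2 * lam) * hH1e i j
  · intro i j
    have hK : (lam • P + (1 - lam) • H).2 i j = lam * P.2 i j + (1 - lam) * H.2 i j := by
      simp [Matrix.add_apply, Matrix.smul_apply, smul_eq_mul]
    rw [hK]
    linear_combination lam * hP2e i j + (1 - 2 * lam) * hH2e i j
end

section
/- For m×n bimatrix games, the following three classes coincide: (1) the class of games that are both strategically equivalent to a zero-sum game and strategically equivalent to an identical interest game, 𝓢(𝓩)∩𝓢(𝓘); (2) the class of games that are both additionally equivalent to a zero-sum game and additionally equivalent to an identical interest game, 𝓐(𝓩)∩𝓐(𝓘) = (𝓩+𝓔)∩(𝓘+𝓔); and (3) the class 𝓑 of zero-sum equivalent potential games. -/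
open Matrix Filter

lemma additive_both {m n : ℕ} (G : Game m n) (a c : Fin m → ℝ) (b d : Fin n → ℝ)
    (hA : ∀ i j, G.1 i j = a i + b j) (hB : ∀ i j, G.2 i j = c i + d j) :
    IsZeroSumEquivAdd G ∧ IsPotentialGame G := by
  constructor
  · refine ⟨(G.1 - Matrix.of fun _ j => b j + d j, G.2 - Matrix.of fun i _ => a i + c i),
      (Matrix.of fun _ j => b j + d j, Matrix.of fun i _ => a i + c i), ?_,
      ⟨fun j => b j + d j, fun i => a i + c i, fun i j => rfl, fun i j => rfl⟩, ?_⟩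
    · ext i j
      simp only [Matrix.add_apply, Matrix.sub_apply, Matrix.of_apply, Matrix.zero_apply,
        hA, hB]
      ring
    · apply Prod.ext <;> simp
  · refine ⟨(G.1 - Matrix.of fun _ j => b j - d j, G.2 - Matrix.of fun i _ => c i - a i),
      (Matrix.of fun _ j => b j - d j, Matrix.of fun i _ => c i - a i),
      ?_,
      ⟨fun j => b j - d j, fun i => c i - a i, fun i j => rfl, fun i j => rfl⟩, ?_⟩
    · ext i j
      simp only [Matrix.sub_apply, Matrix.of_apply, hA, hB]
      ring
    · apply Prod.ext <;> simp

theorem stmt10 {m n : ℕ} (hm : 1 ≤ m) (hn : 1 ≤ n) (G : Game m n) :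
    ((StratEquivZeroSum G ∧ StratEquivIdInterest G) ↔
      (IsZeroSumEquivAdd G ∧ IsPotentialGame G)) ∧
    ((IsZeroSumEquivAdd G ∧ IsPotentialGame G) ↔ IsZSEP G) := by
  constructor
  · constructor
    · rintro ⟨⟨Z, hZ, α, β, hα, hβ, E, ⟨x, y, hx, hy⟩, h1, h2⟩,
        ⟨I, hI, γ, δ, hγ, hδ, F, ⟨u, v, hu, hv⟩, g1, g2⟩⟩
      unfold ZeroSum at hZ
      unfold IdInterest at hI
      rw [h1, h2] at hZ
      rw [g1, g2] at hI
      have e1 : ∀ i j, α * G.1 i j + β * G.2 i j = -(x j) - y i := by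
        intro i j
        have := Matrix.ext_iff.2 hZ i j
        simp only [Matrix.add_apply, Matrix.smul_apply, Matrix.zero_apply, smul_eq_mul,
          hx, hy] at this
        linarith
      have e2 : ∀ i j, γ * G.1 i j - δ * G.2 i j = v i - u j := by
        intro i j
        have := Matrix.ext_iff.2 hI i j
        simp only [Matrix.add_apply, Matrix.smul_apply, smul_eq_mul, hx, hy, hu, hv] at this
        linarith
      have hk : (0:ℝ) < α * δ + β * γ := by positivity
      refine additive_both G (fun i => (δ * (-(y i)) + β * v i) / (α * δ + β * γ))
        (fun i => (γ * (-(y i)) - α * v i) / (α * δ + β * γ))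
        (fun j => (δ * (-(x j)) - β * u j) / (α * δ + β * γ))
        (fun j => (γ * (-(x j)) + α * u j) / (α * δ + β * γ)) ?_ ?_
      · intro i j
        have h1' := e1 i j
        have h2' := e2 i j
        rw [← add_div, eq_div_iff hk.ne']
        linear_combination δ * h1' + β * h2'
      · intro i j
        have h1' := e1 i j
        have h2' := e2 i j
        rw [← add_div, eq_div_iff hk.ne']
        linear_combination γ * h1' - α * h2'
    · rintro ⟨⟨Z, E, hZ, ⟨x, y, hx, hy⟩, hG⟩, ⟨I, F, hI, ⟨u, v, hu, hv⟩, hG'⟩⟩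
      constructor
      · refine ⟨Z, hZ, 1, 1, one_pos, one_pos, (-E.1, -E.2),
          ⟨fun j => -(x j), fun i => -(y i), fun i j => by simp [hx], fun i j => by simp [hy]⟩,
          ?_, ?_⟩
        · rw [hG]; simp
        · rw [hG]; simp
      · refine ⟨I, hI, 1, 1, one_pos, one_pos, (-F.1, -F.2),
          ⟨fun j => -(u j), fun i => -(v i), fun i j => by simp [hu], fun i j => by simp [hv]⟩,
          ?_, ?_⟩
        · rw [hG']; simp
        · rw [hG']; simp
  · exact ⟨fun ⟨a, b⟩ => ⟨b, a⟩, fun ⟨a, b⟩ => ⟨b, a⟩⟩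
end

section
/- Every harmonic m×n bimatrix game, i.e. every game of the form H + E where H is a normalized harmonic game and E is a non-strategic game, has the fictitious play property: every discrete-time fictitious play sequence of the game converges to its set of Nash equilibria. -/
open Matrix Filter

namespace RobinsonFP

variable {m n : ℕ}

/-- A Robinson vector system for matrix `A` restricted to rows `S` and columns `T`,
with horizon `N`. -/
def IsSys (A : Matrix (Fin m) (Fin n) ℝ) (S : Finset (Fin m)) (T : Finset (Fin n))
    (U : ℕ → Fin m → ℝ) (V : ℕ → Fin n → ℝ) (I : ℕ → Fin m) (J : ℕ → Fin n) (N : ℕ) : Prop :=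
  ∀ t, t < N →
    I t ∈ S ∧ J t ∈ T ∧
    (∀ i ∈ S, U t i ≤ U t (I t)) ∧
    (∀ j ∈ T, V t (J t) ≤ V t j) ∧
    (∀ i, U (t+1) i = U t i + A i (J t)) ∧
    (∀ j, V (t+1) j = V t j + A (I t) j)

variable {A : Matrix (Fin m) (Fin n) ℝ} {S : Finset (Fin m)} {T : Finset (Fin n)}
  {U : ℕ → Fin m → ℝ} {V : ℕ → Fin n → ℝ} {I : ℕ → Fin m} {J : ℕ → Fin n} {N : ℕ}
  {a : ℝ}

lemma U_eq_sum (h : IsSys A S T U V I J N) {t : ℕ} (ht : t ≤ N) (i : Fin m) :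
    U t i = U 0 i + ∑ τ ∈ Finset.range t, A i (J τ) := by
  induction t with
  | zero => simp
  | succ t ih =>
    have h1 : t < N := ht
    rw [(h t h1).2.2.2.2.1 i, ih (le_of_lt h1), Finset.sum_range_succ]
    ring

lemma V_eq_sum (h : IsSys A S T U V I J N) {t : ℕ} (ht : t ≤ N) (j : Fin n) :
    V t j = V 0 j + ∑ τ ∈ Finset.range t, A (I τ) j := by
  induction t with
  | zero => simp
  | succ t ih =>
    have h1 : t < N := ht
    rw [(h t h1).2.2.2.2.2 j, ih (le_of_lt h1), Finset.sum_range_succ]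
    ring

lemma U_diff (h : IsSys A S T U V I J N) {s t : ℕ} (hst : s ≤ t) (ht : t ≤ N) (i : Fin m) :
    U t i = U s i + ∑ τ ∈ Finset.Ico s t, A i (J τ) := by
  rw [U_eq_sum h ht i, U_eq_sum h (hst.trans ht) i,
    ← Finset.sum_range_add_sum_Ico _ hst]
  ring

lemma V_diff (h : IsSys A S T U V I J N) {s t : ℕ} (hst : s ≤ t) (ht : t ≤ N) (j : Fin n) :
    V t j = V s j + ∑ τ ∈ Finset.Ico s t, A (I τ) j := by
  rw [V_eq_sum h ht j, V_eq_sum h (hst.trans ht) j,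
    ← Finset.sum_range_add_sum_Ico _ hst]
  ring

lemma abs_U_diff (h : IsSys A S T U V I J N) (ha : ∀ i j, |A i j| ≤ a)
    {s t : ℕ} (hst : s ≤ t) (ht : t ≤ N) (i : Fin m) :
    |U t i - U s i| ≤ a * ((t : ℝ) - s) := by
  rw [U_diff h hst ht i]
  have : |∑ τ ∈ Finset.Ico s t, A i (J τ)| ≤ a * ((t : ℝ) - s) := by
    calc |∑ τ ∈ Finset.Ico s t, A i (J τ)| ≤ ∑ τ ∈ Finset.Ico s t, |A i (J τ)| :=
          Finset.abs_sum_le_sum_abs _ _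
      _ ≤ ∑ τ ∈ Finset.Ico s t, a := Finset.sum_le_sum fun τ _ => ha i (J τ)
      _ = (t - s : ℕ) * a := by rw [Finset.sum_const, Nat.card_Ico]; simp [mul_comm]
      _ = a * ((t : ℝ) - s) := by rw [Nat.cast_sub hst]; ring
  simpa using this

lemma abs_V_diff (h : IsSys A S T U V I J N) (ha : ∀ i j, |A i j| ≤ a)
    {s t : ℕ} (hst : s ≤ t) (ht : t ≤ N) (j : Fin n) :
    |V t j - V s j| ≤ a * ((t : ℝ) - s) := by
  rw [V_diff h hst ht j]
  have : |∑ τ ∈ Finset.Ico s t, A (I τ) j| ≤ a * ((t : ℝ) - s) := by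
    calc |∑ τ ∈ Finset.Ico s t, A (I τ) j| ≤ ∑ τ ∈ Finset.Ico s t, |A (I τ) j| :=
          Finset.abs_sum_le_sum_abs _ _
      _ ≤ ∑ τ ∈ Finset.Ico s t, a := Finset.sum_le_sum fun τ _ => ha (I τ) j
      _ = (t - s : ℕ) * a := by rw [Finset.sum_const, Nat.card_Ico]; simp [mul_comm]
      _ = a * ((t : ℝ) - s) := by rw [Nat.cast_sub hst]; ring
  simpa using this

lemma supU_drift (h : IsSys A S T U V I J N) (ha : ∀ i j, |A i j| ≤ a) (hS : S.Nonempty)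
    {s t : ℕ} (hst : s ≤ t) (ht : t ≤ N) :
    S.sup' hS (U t) ≤ S.sup' hS (U s) + a * ((t : ℝ) - s) := by
  refine Finset.sup'_le _ _ fun i hi => ?_
  have h1 := abs_U_diff h ha hst ht i
  have h2 := Finset.le_sup' (U s) hi
  have := abs_le.1 h1
  linarith [this.2]

lemma infV_drift (h : IsSys A S T U V I J N) (ha : ∀ i j, |A i j| ≤ a) (hT : T.Nonempty)
    {s t : ℕ} (hst : s ≤ t) (ht : t ≤ N) :
    T.inf' hT (V s) - a * ((t : ℝ) - s) ≤ T.inf' hT (V t) := by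
  refine Finset.le_inf' hT _ fun j hj => ?_
  have h1 := abs_V_diff h ha hst ht j
  have h2 := Finset.inf'_le (V s) hj
  have := abs_le.1 h1
  linarith [this.1]

/-- Eligibility lemma: a row chosen at time `τ ∈ [s,t)` stays within `2a(t-τ)` of the max. -/
lemma eligible_row (h : IsSys A S T U V I J N) (ha : ∀ i j, |A i j| ≤ a) (hS : S.Nonempty)
    {τ t : ℕ} (hτ : τ < t) (ht : t ≤ N) :
    S.sup' hS (U t) - 2 * a * ((t : ℝ) - τ) ≤ U t (I τ) := by
  have hτN : τ < N := lt_of_lt_of_le hτ ht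
  obtain ⟨hIτ, _, hmax, _, _, _⟩ := h τ hτN
  have h1 : S.sup' hS (U τ) ≤ U τ (I τ) := Finset.sup'_le _ _ hmax
  have h2 := supU_drift h ha hS (le_of_lt hτ) ht
  have h3 := abs_U_diff h ha (le_of_lt hτ) ht (I τ)
  have := abs_le.1 h3
  linarith [this.1]

lemma eligible_col (h : IsSys A S T U V I J N) (ha : ∀ i j, |A i j| ≤ a) (hT : T.Nonempty)
    {τ t : ℕ} (hτ : τ < t) (ht : t ≤ N) :
    V t (J τ) ≤ T.inf' hT (V t) + 2 * a * ((t : ℝ) - τ) := by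
  have hτN : τ < N := lt_of_lt_of_le hτ ht
  obtain ⟨_, hJτ, _, hmin, _, _⟩ := h τ hτN
  have h1 : V τ (J τ) ≤ T.inf' hT (V τ) := Finset.le_inf' hT _ hmin
  have h2 := infV_drift h ha hT (le_of_lt hτ) ht
  have h3 := abs_V_diff h ha (le_of_lt hτ) ht (J τ)
  have := abs_le.1 h3
  linarith [this.2]

lemma count_identity (h : IsSys A S T U V I J N) {t : ℕ} (ht : t ≤ N) :
    ∑ τ ∈ Finset.range t, (U t (I τ) - U 0 (I τ)) =
    ∑ σ ∈ Finset.range t, (V t (J σ) - V 0 (J σ)) := by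
  have hU : ∀ τ ∈ Finset.range t, U t (I τ) - U 0 (I τ) = ∑ σ ∈ Finset.range t, A (I τ) (J σ) := by
    intro τ _; rw [U_eq_sum h ht (I τ)]; ring
  have hV : ∀ σ ∈ Finset.range t, V t (J σ) - V 0 (J σ) = ∑ τ ∈ Finset.range t, A (I τ) (J σ) := by
    intro σ _; rw [V_eq_sum h ht (J σ)]; ring
  rw [Finset.sum_congr rfl hU, Finset.sum_congr rfl hV, Finset.sum_comm]

/-- Robinson's Lemma 2: if every row and column is chosen in the window `[s, t)`,
then the gap at `t` is at most the gap at `0` plus `4a(t-s)`. -/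
lemma all_eligible (h : IsSys A S T U V I J N) (ha : ∀ i j, |A i j| ≤ a) (ha0 : 0 ≤ a)
    (hS : S.Nonempty) (hT : T.Nonempty)
    {s t : ℕ} (ht : t ≤ N) (ht1 : 1 ≤ t)
    (hrows : ∀ i ∈ S, ∃ τ, s ≤ τ ∧ τ < t ∧ I τ = i)
    (hcols : ∀ j ∈ T, ∃ τ, s ≤ τ ∧ τ < t ∧ J τ = j) :
    S.sup' hS (U t) - T.inf' hT (V t) ≤
      (S.sup' hS (U 0) - T.inf' hT (V 0)) + 4 * a * ((t : ℝ) - s) := by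
  have key1 : ∀ i ∈ S, S.sup' hS (U t) - 2 * a * ((t : ℝ) - s) ≤ U t i := by
    intro i hi
    obtain ⟨τ, hsτ, hτt, hIτ⟩ := hrows i hi
    have := eligible_row h ha hS hτt ht
    rw [hIτ] at this
    have hmono : 2 * a * ((t : ℝ) - τ) ≤ 2 * a * ((t : ℝ) - s) := by
      have : (s : ℝ) ≤ τ := Nat.cast_le.2 hsτ
      nlinarith
    linarith
  have key2 : ∀ j ∈ T, V t j ≤ T.inf' hT (V t) + 2 * a * ((t : ℝ) - s) := by
    intro j hj
    obtain ⟨τ, hsτ, hτt, hJτ⟩ := hcols j hj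
    have := eligible_col h ha hT hτt ht
    rw [hJτ] at this
    have hmono : 2 * a * ((t : ℝ) - τ) ≤ 2 * a * ((t : ℝ) - s) := by
      have : (s : ℝ) ≤ τ := Nat.cast_le.2 hsτ
      nlinarith
    linarith
  -- sum bounds
  have hL : (t : ℝ) * (S.sup' hS (U t) - 2 * a * ((t : ℝ) - s) - S.sup' hS (U 0)) ≤
      ∑ τ ∈ Finset.range t, (U t (I τ) - U 0 (I τ)) := by
    have : ∀ τ ∈ Finset.range t,
        S.sup' hS (U t) - 2 * a * ((t : ℝ) - s) - S.sup' hS (U 0) ≤ U t (I τ) - U 0 (I τ) := by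
      intro τ hτ
      have hτt : τ < t := Finset.mem_range.1 hτ
      have hIτS : I τ ∈ S := (h τ (lt_of_lt_of_le hτt ht)).1
      have h1 := key1 (I τ) hIτS
      have h2 : U 0 (I τ) ≤ S.sup' hS (U 0) := Finset.le_sup' (U 0) hIτS
      linarith
    calc (t : ℝ) * (S.sup' hS (U t) - 2 * a * ((t : ℝ) - s) - S.sup' hS (U 0))
        = ∑ _τ ∈ Finset.range t, (S.sup' hS (U t) - 2 * a * ((t : ℝ) - s) - S.sup' hS (U 0)) := by
          rw [Finset.sum_const, Finset.card_range]; ring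
      _ ≤ _ := Finset.sum_le_sum this
  have hR : ∑ σ ∈ Finset.range t, (V t (J σ) - V 0 (J σ)) ≤
      (t : ℝ) * (T.inf' hT (V t) + 2 * a * ((t : ℝ) - s) - T.inf' hT (V 0)) := by
    have : ∀ σ ∈ Finset.range t,
        V t (J σ) - V 0 (J σ) ≤ T.inf' hT (V t) + 2 * a * ((t : ℝ) - s) - T.inf' hT (V 0) := by
      intro σ hσ
      have hσt : σ < t := Finset.mem_range.1 hσ
      have hJσT : J σ ∈ T := (h σ (lt_of_lt_of_le hσt ht)).2.1
      have h1 := key2 (J σ) hJσT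
      have h2 : T.inf' hT (V 0) ≤ V 0 (J σ) := Finset.inf'_le (V 0) hJσT
      linarith
    calc ∑ σ ∈ Finset.range t, (V t (J σ) - V 0 (J σ))
        ≤ ∑ _σ ∈ Finset.range t, (T.inf' hT (V t) + 2 * a * ((t : ℝ) - s) - T.inf' hT (V 0)) :=
          Finset.sum_le_sum this
      _ = _ := by rw [Finset.sum_const, Finset.card_range]; ring
  have hid := count_identity h ht
  have htpos : (0 : ℝ) < t := by exact_mod_cast ht1
  have hcomb : (t : ℝ) * (S.sup' hS (U t) - 2 * a * ((t : ℝ) - s) - S.sup' hS (U 0)) ≤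
      (t : ℝ) * (T.inf' hT (V t) + 2 * a * ((t : ℝ) - s) - T.inf' hT (V 0)) := by
    rw [hid] at hL; linarith
  have := (mul_le_mul_iff_right₀ htpos).1 hcomb
  linarith



/-- Restriction of a system to a window where row `i₀` is never chosen
yields a system on `S.erase i₀`. -/
lemma subsystem_row (h : IsSys A S T U V I J N) {s t : ℕ} (hst : s ≤ t) (ht : t ≤ N)
    {i₀ : Fin m} (hinel : ∀ τ, s ≤ τ → τ < t → I τ ≠ i₀) :
    IsSys A (S.erase i₀) T (fun τ => U (s + τ)) (fun τ => V (s + τ))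
      (fun τ => I (s + τ)) (fun τ => J (s + τ)) (t - s) := by
  intro τ hτ
  have h1 : s + τ < t := by omega
  obtain ⟨hI, hJ, hmax, hmin, hU, hV⟩ := h (s + τ) (lt_of_lt_of_le h1 ht)
  exact ⟨Finset.mem_erase.2 ⟨hinel _ (by omega) h1, hI⟩, hJ,
    fun i hi => hmax i (Finset.mem_of_mem_erase hi), hmin, hU, hV⟩

lemma subsystem_col (h : IsSys A S T U V I J N) {s t : ℕ} (hst : s ≤ t) (ht : t ≤ N)
    {j₀ : Fin n} (hinel : ∀ τ, s ≤ τ → τ < t → J τ ≠ j₀) :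
    IsSys A S (T.erase j₀) (fun τ => U (s + τ)) (fun τ => V (s + τ))
      (fun τ => I (s + τ)) (fun τ => J (s + τ)) (t - s) := by
  intro τ hτ
  have h1 : s + τ < t := by omega
  obtain ⟨hI, hJ, hmax, hmin, hU, hV⟩ := h (s + τ) (lt_of_lt_of_le h1 ht)
  exact ⟨hI, Finset.mem_erase.2 ⟨hinel _ (by omega) h1, hJ⟩, hmax,
    fun j hj => hmin j (Finset.mem_of_mem_erase hj), hU, hV⟩

/-- Edge lemma: the max over `S` exceeds the max over a subset containing the last
chosen row by at most `2a`. -/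
lemma sup_erase (h : IsSys A S T U V I J N) (ha : ∀ i j, |A i j| ≤ a)
    (hS : S.Nonempty) {t' : ℕ} (ht' : t' < N) {S' : Finset (Fin m)} (hS' : S'.Nonempty)
    (hsub : S' ⊆ S) (hmem : I t' ∈ S') :
    S.sup' hS (U (t' + 1)) ≤ S'.sup' hS' (U (t' + 1)) + 2 * a := by
  obtain ⟨_, _, hmax, _, hU, _⟩ := h t' ht'
  refine Finset.sup'_le _ _ fun i hi => ?_
  have h1 : U (t' + 1) i = U t' i + A i (J t') := hU i
  have h2 : U (t' + 1) (I t') = U t' (I t') + A (I t') (J t') := hU (I t')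
  have h3 := hmax i hi
  have h4 : U (t' + 1) (I t') ≤ S'.sup' hS' (U (t' + 1)) := Finset.le_sup' _ hmem
  have h5 := ha i (J t')
  have h6 := ha (I t') (J t')
  have h5' := abs_le.1 h5
  have h6' := abs_le.1 h6
  linarith [h5'.1, h5'.2, h6'.1, h6'.2]

lemma inf_erase (h : IsSys A S T U V I J N) (ha : ∀ i j, |A i j| ≤ a)
    (hT : T.Nonempty) {t' : ℕ} (ht' : t' < N) {T' : Finset (Fin n)} (hT' : T'.Nonempty)
    (hsub : T' ⊆ T) (hmem : J t' ∈ T') :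
    T'.inf' hT' (V (t' + 1)) - 2 * a ≤ T.inf' hT (V (t' + 1)) := by
  obtain ⟨_, _, _, hmin, _, hV⟩ := h t' ht'
  refine Finset.le_inf' hT _ fun j hj => ?_
  have h1 : V (t' + 1) j = V t' j + A (I t') j := hV j
  have h2 : V (t' + 1) (J t') = V t' (J t') + A (I t') (J t') := hV (J t')
  have h3 := hmin j hj
  have h4 : T'.inf' hT' (V (t' + 1)) ≤ V (t' + 1) (J t') := Finset.inf'_le _ hmem
  have h5 := abs_le.1 (ha (I t') j)
  have h6 := abs_le.1 (ha (I t') (J t'))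
  linarith [h5.1, h5.2, h6.1, h6.2]

lemma sup'_subset {S' : Finset (Fin m)} (hS' : S'.Nonempty) (hS : S.Nonempty)
    (hsub : S' ⊆ S) (f : Fin m → ℝ) : S'.sup' hS' f ≤ S.sup' hS f :=
  Finset.sup'_le _ _ fun i hi => Finset.le_sup' f (hsub hi)

lemma inf'_subset {T' : Finset (Fin n)} (hT' : T'.Nonempty) (hT : T.Nonempty)
    (hsub : T' ⊆ T) (f : Fin n → ℝ) : T.inf' hT f ≤ T'.inf' hT' f :=
  Finset.le_inf' _ _ fun j hj => Finset.inf'_le f (hsub hj)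


/-- Robinson's key theorem: on any sub-block, the gap of a vector system grows
at most like `ε t` plus a constant, uniformly over systems. -/
theorem robinson_key (A : Matrix (Fin m) (Fin n) ℝ) {a : ℝ} (ha : ∀ i j, |A i j| ≤ a)
    (ha0 : 0 ≤ a) :
    ∀ (k : ℕ) (S : Finset (Fin m)) (T : Finset (Fin n)) (hS : S.Nonempty) (hT : T.Nonempty),
      S.card + T.card ≤ k → ∀ ε : ℝ, 0 < ε → ∃ C : ℝ, 0 ≤ C ∧
      ∀ U V I J N, IsSys A S T U V I J N → ∀ t, t ≤ N →
        S.sup' hS (U t) - T.inf' hT (V t) ≤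
          (S.sup' hS (U 0) - T.inf' hT (V 0)) + ε * t + C := by
  intro k
  induction k with
  | zero =>
    intro S T hS hT hcard
    exfalso
    have := Finset.card_pos.2 hS
    omega
  | succ k IH =>
    intro S T hS hT hcard ε hε
    -- uniform constants for the row-deleted submatrices
    have hrow : ∀ i₀ : Fin m, ∃ C : ℝ, 0 ≤ C ∧
        ∀ (_ : i₀ ∈ S) (hS' : (S.erase i₀).Nonempty),
        ∀ U V I J N, IsSys A (S.erase i₀) T U V I J N → ∀ t, t ≤ N →
          (S.erase i₀).sup' hS' (U t) - T.inf' hT (V t) ≤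
            ((S.erase i₀).sup' hS' (U 0) - T.inf' hT (V 0)) + (ε / 2) * t + C := by
      intro i₀
      by_cases hi₀ : i₀ ∈ S ∧ (S.erase i₀).Nonempty
      · obtain ⟨C, hC0, hC⟩ := IH (S.erase i₀) T hi₀.2 hT
          (by have := Finset.card_erase_of_mem hi₀.1
              have h1 := Finset.card_pos.2 hS
              omega) (ε / 2) (by linarith)
        exact ⟨C, hC0, fun _ _ => hC⟩
      · exact ⟨0, le_refl 0, fun h1 h2 => absurd ⟨h1, h2⟩ hi₀⟩
    have hcol : ∀ j₀ : Fin n, ∃ C : ℝ, 0 ≤ C ∧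
        ∀ (_ : j₀ ∈ T) (hT' : (T.erase j₀).Nonempty),
        ∀ U V I J N, IsSys A S (T.erase j₀) U V I J N → ∀ t, t ≤ N →
          S.sup' hS (U t) - (T.erase j₀).inf' hT' (V t) ≤
            (S.sup' hS (U 0) - (T.erase j₀).inf' hT' (V 0)) + (ε / 2) * t + C := by
      intro j₀
      by_cases hj₀ : j₀ ∈ T ∧ (T.erase j₀).Nonempty
      · obtain ⟨C, hC0, hC⟩ := IH S (T.erase j₀) hS hj₀.2
          (by have := Finset.card_erase_of_mem hj₀.1
              have h1 := Finset.card_pos.2 hT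
              omega) (ε / 2) (by linarith)
        exact ⟨C, hC0, fun _ _ => hC⟩
      · exact ⟨0, le_refl 0, fun h1 h2 => absurd ⟨h1, h2⟩ hj₀⟩
    choose fC hfC0 hfC using hrow
    choose fD hfD0 hfD using hcol
    set C' : ℝ := S.sup' hS fC ⊔ T.sup' hT fD with hC'def
    have hSex := hS
    obtain ⟨i₁, hi₁⟩ := hSex
    have hC'0 : 0 ≤ C' :=
      le_trans (hfC0 i₁) (le_trans (Finset.le_sup' fC hi₁) le_sup_left)
    have hfC_le : ∀ i₀ ∈ S, fC i₀ ≤ C' :=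
      fun i hi => le_trans (Finset.le_sup' fC hi) le_sup_left
    have hfD_le : ∀ j₀ ∈ T, fD j₀ ≤ C' :=
      fun j hj => le_trans (Finset.le_sup' fD hj) le_sup_right
    set Δ : ℕ := max 1 ⌈2 * (C' + 2 * a) / ε⌉₊ with hΔdef
    have hΔ1 : 1 ≤ Δ := le_max_left _ _
    have hΔR : (1 : ℝ) ≤ (Δ : ℕ) := by exact_mod_cast hΔ1
    have hΔbound : C' + 2 * a ≤ ε / 2 * Δ := by
      have h1 : 2 * (C' + 2 * a) / ε ≤ (⌈2 * (C' + 2 * a) / ε⌉₊ : ℝ) := Nat.le_ceil _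
      have h2 : ((⌈2 * (C' + 2 * a) / ε⌉₊ : ℕ) : ℝ) ≤ (Δ : ℝ) := by
        exact_mod_cast le_max_right 1 _
      have h3 : 2 * (C' + 2 * a) / ε ≤ (Δ : ℝ) := le_trans h1 h2
      rw [div_le_iff₀ hε] at h3
      linarith
    refine ⟨4 * a * Δ, by positivity, ?_⟩
    intro U V I J N hsys t
    induction t using Nat.strong_induction_on with
    | _ t ihR =>
      intro htN
      by_cases hsmall : t ≤ Δ
      · have h1 := supU_drift hsys ha hS (Nat.zero_le t) htN
        have h2 := infV_drift hsys ha hT (Nat.zero_le t) htN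
        have htΔ : (t : ℝ) ≤ (Δ : ℕ) := by exact_mod_cast hsmall
        have haux : a * (t : ℝ) ≤ a * Δ := mul_le_mul_of_nonneg_left htΔ ha0
        have hεt : (0 : ℝ) ≤ ε * t := by positivity
        push_cast at h1 h2
        rw [sub_zero] at h1 h2
        have h0 : (0:ℝ) ≤ a * (Δ : ℕ) := by positivity
        linarith
      · push_neg at hsmall
        set s := t - Δ with hsdef
        have hst : s < t := by omega
        have hs1 : s + Δ = t := by omega
        have hsN : s < N := lt_of_lt_of_le hst htN
        have hcastt : (t : ℝ) = (s : ℝ) + (Δ : ℕ) := by exact_mod_cast hs1.symm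
        have hmulε : ε * (t : ℝ) = ε * s + ε * Δ := by rw [hcastt]; ring
        by_cases hE : (∀ i ∈ S, ∃ τ, s ≤ τ ∧ τ < t ∧ I τ = i) ∧
            (∀ j ∈ T, ∃ τ, s ≤ τ ∧ τ < t ∧ J τ = j)
        · have h4 := all_eligible hsys ha ha0 hS hT htN (by omega) hE.1 hE.2
          have hcast : (t : ℝ) - (s : ℝ) = (Δ : ℕ) := by linarith
          rw [hcast] at h4
          have hεt : (0 : ℝ) ≤ ε * t := by positivity
          linarith
        · rcases not_and_or.1 hE with hcase | hcase
          · push_neg at hcase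
            obtain ⟨i₀, hi₀S, hinel⟩ := hcase
            have hIsS' : I s ∈ S.erase i₀ :=
              Finset.mem_erase.2 ⟨hinel s le_rfl hst, (hsys s hsN).1⟩
            have hS' : (S.erase i₀).Nonempty := ⟨I s, hIsS'⟩
            have hsub := subsystem_row hsys (le_of_lt hst) htN hinel
            rw [show t - s = Δ by omega] at hsub
            have hbound := hfC i₀ hi₀S hS' _ _ _ _ _ hsub Δ le_rfl
            simp only [Nat.add_zero, hs1] at hbound
            have ht1N : t - 1 < N := by omega
            have hedge := sup_erase hsys ha hS ht1N hS' (Finset.erase_subset _ _)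
              (Finset.mem_erase.2 ⟨hinel (t - 1) (by omega) (by omega),
                (hsys (t - 1) ht1N).1⟩)
            rw [show t - 1 + 1 = t by omega] at hedge
            have hmono := sup'_subset hS' hS (Finset.erase_subset _ _) (U s)
            have hmono0 := sup'_subset hS' hS (Finset.erase_subset _ _) (U 0)
            have hRs := ihR s hst (le_of_lt hsN)
            have hfle := hfC_le i₀ hi₀S
            linarith
          · push_neg at hcase
            obtain ⟨j₀, hj₀T, hinel⟩ := hcase
            have hJsT' : J s ∈ T.erase j₀ :=
              Finset.mem_erase.2 ⟨hinel s le_rfl hst, (hsys s hsN).2.1⟩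
            have hT' : (T.erase j₀).Nonempty := ⟨J s, hJsT'⟩
            have hsub := subsystem_col hsys (le_of_lt hst) htN hinel
            rw [show t - s = Δ by omega] at hsub
            have hbound := hfD j₀ hj₀T hT' _ _ _ _ _ hsub Δ le_rfl
            simp only [Nat.add_zero, hs1] at hbound
            have ht1N : t - 1 < N := by omega
            have hedge := inf_erase hsys ha hT ht1N hT' (Finset.erase_subset _ _)
              (Finset.mem_erase.2 ⟨hinel (t - 1) (by omega) (by omega),
                (hsys (t - 1) ht1N).2.1⟩)
            rw [show t - 1 + 1 = t by omega] at hedge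
            have hmono := inf'_subset hT' hT (Finset.erase_subset _ _) (V s)
            have hmono0 := inf'_subset hT' hT (Finset.erase_subset _ _) (V 0)
            have hRs := ihR s hst (le_of_lt hsN)
            have hfle := hfD_le j₀ hj₀T
            linarith


section Bridge

variable {M : Matrix (Fin m) (Fin n) ℝ}
variable (hum : (Finset.univ : Finset (Fin m)).Nonempty)
variable (hun : (Finset.univ : Finset (Fin n)).Nonempty)

lemma sup'_mul_nonneg {c : ℝ} (hc : 0 ≤ c) (f : Fin m → ℝ) :
    Finset.univ.sup' hum (fun i => c * f i) = c * Finset.univ.sup' hum f := by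
  rcases eq_or_lt_of_le hc with h | h
  · simp [← h]
  · refine le_antisymm (Finset.sup'_le _ _ fun i _ =>
      mul_le_mul_of_nonneg_left (Finset.le_sup' f (Finset.mem_univ i)) hc) ?_
    rw [mul_comm, ← le_div_iff₀ h]
    refine Finset.sup'_le _ _ fun i _ => ?_
    rw [le_div_iff₀ h, mul_comm]
    exact Finset.le_sup' (fun i => c * f i) (Finset.mem_univ i)

lemma inf'_mul_nonneg {c : ℝ} (hc : 0 ≤ c) (f : Fin n → ℝ) :
    Finset.univ.inf' hun (fun j => c * f j) = c * Finset.univ.inf' hun f := by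
  rcases eq_or_lt_of_le hc with h | h
  · simp [← h]
  · refine le_antisymm ?_ (Finset.le_inf' _ _ fun j _ =>
      mul_le_mul_of_nonneg_left (Finset.inf'_le f (Finset.mem_univ j)) hc)
    rw [mul_comm, ← div_le_iff₀ h]
    refine Finset.le_inf' _ _ fun j _ => ?_
    rw [div_le_iff₀ h, mul_comm]
    exact Finset.inf'_le (fun j => c * f j) (Finset.mem_univ j)

lemma dot_le_sup' {p : Fin m → ℝ} (hp : p ∈ stdSimplex ℝ (Fin m)) (v : Fin m → ℝ) :
    p ⬝ᵥ v ≤ Finset.univ.sup' hum v := by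
  calc p ⬝ᵥ v = ∑ i, p i * v i := rfl
    _ ≤ ∑ i, p i * Finset.univ.sup' hum v :=
        Finset.sum_le_sum fun i _ =>
          mul_le_mul_of_nonneg_left (Finset.le_sup' v (Finset.mem_univ i)) (hp.1 i)
    _ = (∑ i, p i) * Finset.univ.sup' hum v := by rw [Finset.sum_mul]
    _ = Finset.univ.sup' hum v := by rw [hp.2, one_mul]

lemma inf'_le_dot {q : Fin n → ℝ} (hq : q ∈ stdSimplex ℝ (Fin n)) (w : Fin n → ℝ) :
    Finset.univ.inf' hun w ≤ w ⬝ᵥ q := by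
  calc Finset.univ.inf' hun w = (∑ j, q j) * Finset.univ.inf' hun w := by rw [hq.2, one_mul]
    _ = ∑ j, q j * Finset.univ.inf' hun w := by rw [Finset.sum_mul]
    _ ≤ ∑ j, q j * w j :=
        Finset.sum_le_sum fun j _ =>
          mul_le_mul_of_nonneg_left (Finset.inf'_le w (Finset.mem_univ j)) (hq.1 j)
    _ = w ⬝ᵥ q := by simp [dotProduct, mul_comm]

/-- The duality-gap function. -/
noncomputable def Phi (M : Matrix (Fin m) (Fin n) ℝ)
    (hum : (Finset.univ : Finset (Fin m)).Nonempty)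
    (hun : (Finset.univ : Finset (Fin n)).Nonempty)
    (z : (Fin m → ℝ) × (Fin n → ℝ)) : ℝ :=
  Finset.univ.sup' hum (fun i => M.mulVec z.2 i) -
    Finset.univ.inf' hun (fun j => M.vecMul z.1 j)

lemma phi_continuous : Continuous (Phi M hum hun) := by
  have hcont1 : ∀ i, Continuous fun z : (Fin m → ℝ) × (Fin n → ℝ) => M.mulVec z.2 i := by
    intro i
    simp only [Matrix.mulVec, dotProduct]
    exact continuous_finset_sum _ fun j _ =>
      continuous_const.mul ((continuous_apply j).comp continuous_snd)
  have hcont2 : ∀ j, Continuous fun z : (Fin m → ℝ) × (Fin n → ℝ) => M.vecMul z.1 j := by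
    intro j
    simp only [Matrix.vecMul, dotProduct]
    exact continuous_finset_sum _ fun i _ =>
      ((continuous_apply i).comp continuous_fst).mul continuous_const
  refine continuous_iff_continuousAt.2 fun z => ContinuousAt.sub ?_ ?_
  · exact ContinuousAt.finset_sup'_apply hum fun i _ => (hcont1 i).continuousAt
  · exact ContinuousAt.finset_inf'_apply hun fun j _ => (hcont2 j).continuousAt

lemma phi_nonneg {p : Fin m → ℝ} {q : Fin n → ℝ} (hp : p ∈ stdSimplex ℝ (Fin m))
    (hq : q ∈ stdSimplex ℝ (Fin n)) : 0 ≤ Phi M hum hun (p, q) := by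
  have h1 := dot_le_sup' hum hp (M.mulVec q)
  have h2 := inf'_le_dot hun hq (M.vecMul p)
  have h3 : p ⬝ᵥ M.mulVec q = M.vecMul p ⬝ᵥ q := Matrix.dotProduct_mulVec p M q
  have h4 : Finset.univ.sup' hum (fun i => M.mulVec q i) = Finset.univ.sup' hum (M.mulVec q) := rfl
  have h5 : Finset.univ.inf' hun (fun j => M.vecMul p j) = Finset.univ.inf' hun (M.vecMul p) := rfl
  simp only [Phi, h4, h5]
  linarith

/-- Uniform closeness to a target set on a compact set where small `Phi` implies membership. -/
lemma uniform_delta (Nash : Set ((Fin m → ℝ) × (Fin n → ℝ)))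
    (hNash : ∀ z, z.1 ∈ stdSimplex ℝ (Fin m) → z.2 ∈ stdSimplex ℝ (Fin n) →
      Phi M hum hun z ≤ 0 → z ∈ Nash)
    {ε : ℝ} (hε : 0 < ε) :
    ∃ δ > 0, ∀ z : (Fin m → ℝ) × (Fin n → ℝ),
      z.1 ∈ stdSimplex ℝ (Fin m) → z.2 ∈ stdSimplex ℝ (Fin n) →
      Phi M hum hun z < δ → Metric.infDist z Nash < ε := by
  classical
  set K : Set ((Fin m → ℝ) × (Fin n → ℝ)) := stdSimplex ℝ (Fin m) ×ˢ stdSimplex ℝ (Fin n)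
  have hK : IsCompact K := (isCompact_stdSimplex ℝ (Fin m)).prod (isCompact_stdSimplex ℝ (Fin n))
  set K' : Set ((Fin m → ℝ) × (Fin n → ℝ)) := K ∩ {z | ε ≤ Metric.infDist z Nash} with hK'def
  have hK'c : IsCompact K' :=
    hK.inter_right (isClosed_le continuous_const (Metric.continuous_infDist_pt _))
  rcases Set.eq_empty_or_nonempty K' with hK'e | hK'ne
  · refine ⟨1, one_pos, fun z hz1 hz2 _ => ?_⟩
    by_contra hcon
    push_neg at hcon
    have : z ∈ K' := ⟨⟨hz1, hz2⟩, hcon⟩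
    rw [hK'e] at this
    exact this
  · obtain ⟨z₀, hz₀K', hz₀min⟩ := hK'c.exists_isMinOn hK'ne (phi_continuous hum hun).continuousOn
    refine ⟨Phi M hum hun z₀, ?_, fun z hz1 hz2 hzδ => ?_⟩
    · by_contra hcon
      push_neg at hcon
      have hmem : z₀ ∈ Nash := hNash z₀ hz₀K'.1.1 hz₀K'.1.2 hcon
      have h0 : Metric.infDist z₀ Nash = 0 := Metric.infDist_zero_of_mem hmem
      have h1 : ε ≤ Metric.infDist z₀ Nash := hz₀K'.2
      rw [h0] at h1
      linarith
    · by_contra hcon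
      push_neg at hcon
      have : z ∈ K' := ⟨⟨hz1, hz2⟩, hcon⟩
      exact absurd (isMinOn_iff.1 hz₀min z this) (not_le.2 hzδ)

end Bridge

end RobinsonFP

theorem stmt12 {m n : ℕ} (hm : 1 ≤ m) (hn : 1 ≤ n) (H E : Game m n)
    (hH : NormHarmonic m n H) (hE : NonStrategic E) :
    HasFPP (H + E) := by
  classical
  obtain ⟨x, y, hx, hy⟩ := hE
  obtain ⟨-, hharm⟩ := hH
  have hum : (Finset.univ : Finset (Fin m)).Nonempty := ⟨⟨0, hm⟩, Finset.mem_univ _⟩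
  have hun : (Finset.univ : Finset (Fin n)).Nonempty := ⟨⟨0, hn⟩, Finset.mem_univ _⟩
  have hm0 : (0:ℝ) < m := by exact_mod_cast hm
  have hn0 : (0:ℝ) < n := by exact_mod_cast hn
  set M : Matrix (Fin m) (Fin n) ℝ := H.1 with hMdef
  set γ : ℝ := -((m:ℝ)/(n:ℝ)) with hγdef
  have hγ : γ < 0 := by
    have : (0:ℝ) < (m:ℝ)/(n:ℝ) := div_pos hm0 hn0
    rw [hγdef]; linarith
  have hH2 : ∀ i j, H.2 i j = γ * M i j := by
    intro i j
    have h0 := congrFun (congrFun hharm i) j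
    simp only [Matrix.add_apply, Matrix.smul_apply, smul_eq_mul, Matrix.zero_apply,
      Pi.add_apply, Pi.smul_apply, Pi.zero_apply] at h0
    rw [hγdef, hMdef]
    field_simp
    linarith
  have hG1 : ∀ (q' : Fin n → ℝ) (i : Fin m),
      (H + E).1.mulVec q' i = M.mulVec q' i + ∑ j, x j * q' j := by
    intro q' i
    simp only [Prod.fst_add, Matrix.mulVec, dotProduct, Matrix.add_apply]
    have hterm : ∀ j : Fin n, (H.1 i j + E.1 i j) * q' j = M i j * q' j + x j * q' j := by
      intro j; rw [hx i j, hMdef]; ring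
    rw [Finset.sum_congr rfl fun j _ => hterm j, Finset.sum_add_distrib]
  have hG2 : ∀ (p' : Fin m → ℝ) (j : Fin n),
      (H + E).2.vecMul p' j = γ * M.vecMul p' j + ∑ i, p' i * y i := by
    intro p' j
    simp only [Prod.snd_add, Matrix.vecMul, dotProduct, Matrix.add_apply]
    have hterm : ∀ i : Fin m, p' i * (H.2 i j + E.2 i j) =
        γ * (p' i * M i j) + p' i * y i := by
      intro i; rw [hH2 i j, hy i j]; ring
    rw [Finset.sum_congr rfl fun i _ => hterm i, Finset.sum_add_distrib, ← Finset.mul_sum]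
  -- Nash sufficiency: zero duality gap w.r.t. M implies Nash for H + E
  have hNashΦ : ∀ z : (Fin m → ℝ) × (Fin n → ℝ), z.1 ∈ stdSimplex ℝ (Fin m) →
      z.2 ∈ stdSimplex ℝ (Fin n) → RobinsonFP.Phi M hum hun z ≤ 0 →
      z ∈ {pq : (Fin m → ℝ) × (Fin n → ℝ) | IsNash (H + E) pq.1 pq.2} := by
    rintro ⟨p', q'⟩ hp hq hφ
    simp only [Set.mem_setOf_eq]
    have h1 := RobinsonFP.dot_le_sup' hum hp (M.mulVec q')
    have h2 := RobinsonFP.inf'_le_dot hun hq (M.vecMul p')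
    have h3 : p' ⬝ᵥ M.mulVec q' = M.vecMul p' ⬝ᵥ q' := Matrix.dotProduct_mulVec p' M q'
    have hφ' : Finset.univ.sup' hum (fun i => M.mulVec q' i) -
        Finset.univ.inf' hun (fun j => M.vecMul p' j) ≤ 0 := hφ
    have e1 : Finset.univ.sup' hum (fun i => M.mulVec q' i) =
        Finset.univ.sup' hum (M.mulVec q') := rfl
    have e2 : Finset.univ.inf' hun (fun j => M.vecMul p' j) =
        Finset.univ.inf' hun (M.vecMul p') := rfl
    have hsup_eq : Finset.univ.sup' hum (M.mulVec q') = p' ⬝ᵥ M.mulVec q' := by linarith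
    have hinf_eq : Finset.univ.inf' hun (M.vecMul p') = M.vecMul p' ⬝ᵥ q' := by linarith
    have hsplit1 : ∀ p'' : Fin m → ℝ, p'' ∈ stdSimplex ℝ (Fin m) →
        p'' ⬝ᵥ (H + E).1.mulVec q' = p'' ⬝ᵥ M.mulVec q' + ∑ j, x j * q' j := by
      intro p'' hp''
      simp only [dotProduct]
      have hterm : ∀ i : Fin m, p'' i * (H + E).1.mulVec q' i =
          p'' i * M.mulVec q' i + p'' i * (∑ j, x j * q' j) := by
        intro i; rw [hG1 q' i]; ring
      rw [Finset.sum_congr rfl fun i _ => hterm i, Finset.sum_add_distrib,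
        ← Finset.sum_mul, hp''.2, one_mul]
    have hsplit2 : ∀ q'' : Fin n → ℝ, q'' ∈ stdSimplex ℝ (Fin n) →
        p' ⬝ᵥ (H + E).2.mulVec q'' = γ * (M.vecMul p' ⬝ᵥ q'') + ∑ i, p' i * y i := by
      intro q'' hq''
      rw [Matrix.dotProduct_mulVec]
      simp only [dotProduct]
      have hterm : ∀ j : Fin n, (H + E).2.vecMul p' j * q'' j =
          γ * (M.vecMul p' j * q'' j) + (∑ i, p' i * y i) * q'' j := by
        intro j; rw [hG2 p' j]; ring
      rw [Finset.sum_congr rfl fun j _ => hterm j, Finset.sum_add_distrib,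
        ← Finset.mul_sum, ← Finset.mul_sum]
      have hq2 : (∑ j, q'' j) = 1 := hq''.2
      rw [hq2, mul_one]
    refine ⟨hp, hq, ?_, ?_⟩
    · intro p'' hp''
      rw [hsplit1 p'' hp'', hsplit1 p' hp]
      have := RobinsonFP.dot_le_sup' hum hp'' (M.mulVec q')
      linarith
    · intro q'' hq''
      rw [hsplit2 q'' hq'', hsplit2 q' hq]
      have hd := RobinsonFP.inf'_le_dot hun hq'' (M.vecMul p')
      have : γ * (M.vecMul p' ⬝ᵥ q'') ≤ γ * (M.vecMul p' ⬝ᵥ q') := by nlinarith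
      linarith
  -- now the fictitious play part
  intro p q hdfp
  obtain ⟨hsimp, hstep⟩ := hdfp
  choose I J hbr1 hbr2 hpup hqup using hstep
  set U : ℕ → Fin m → ℝ := fun t i => (t : ℝ) * M.mulVec (q t) i with hUdef
  set V : ℕ → Fin n → ℝ := fun t j => (t : ℝ) * M.vecMul (p t) j with hVdef
  have hq1 : ∀ (t : ℕ) (j' : Fin n),
      ((t:ℝ)+1) * q (t+1) j' = (t:ℝ) * q t j' + (Pi.single (J t) 1 : Fin n → ℝ) j' := by
    intro t j'
    have hcf := congrFun (hqup t) j'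
    rw [hcf]
    simp only [Pi.add_apply, Pi.smul_apply, smul_eq_mul]
    have ht1 : (t:ℝ) + 1 ≠ 0 := by positivity
    field_simp
  have hp1 : ∀ (t : ℕ) (i' : Fin m),
      ((t:ℝ)+1) * p (t+1) i' = (t:ℝ) * p t i' + (Pi.single (I t) 1 : Fin m → ℝ) i' := by
    intro t i'
    have hcf := congrFun (hpup t) i'
    rw [hcf]
    simp only [Pi.add_apply, Pi.smul_apply, smul_eq_mul]
    have ht1 : (t:ℝ) + 1 ≠ 0 := by positivity
    field_simp
  have hsys : ∀ N, RobinsonFP.IsSys M Finset.univ Finset.univ U V I J N := by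
    intro N t _
    refine ⟨Finset.mem_univ _, Finset.mem_univ _, ?_, ?_, ?_, ?_⟩
    · intro i _
      have h1 := hbr1 t i
      rw [hG1 (q t) i, hG1 (q t) (I t)] at h1
      have h2 : M.mulVec (q t) i ≤ M.mulVec (q t) (I t) := by linarith
      simp only [hUdef]
      exact mul_le_mul_of_nonneg_left h2 (by positivity)
    · intro j _
      have h1 := hbr2 t j
      rw [hG2 (p t) j, hG2 (p t) (J t)] at h1
      have h2 : M.vecMul (p t) (J t) ≤ M.vecMul (p t) j := by
        by_contra hc
        push_neg at hc
        nlinarith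
      simp only [hVdef]
      exact mul_le_mul_of_nonneg_left h2 (by positivity)
    · intro i
      simp only [hUdef]
      push_cast
      simp only [Matrix.mulVec, dotProduct]
      rw [Finset.mul_sum, Finset.mul_sum]
      have hterm : ∀ j' : Fin n, ((t:ℝ)+1) * (M i j' * q (t+1) j') =
          M i j' * ((t:ℝ) * q t j') + M i j' * (Pi.single (J t) 1 : Fin n → ℝ) j' := by
        intro j'
        calc ((t:ℝ)+1) * (M i j' * q (t+1) j')
            = M i j' * (((t:ℝ)+1) * q (t+1) j') := by ring
          _ = M i j' * ((t:ℝ) * q t j' + (Pi.single (J t) 1 : Fin n → ℝ) j') := by rw [hq1 t j']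
          _ = _ := by ring
      rw [Finset.sum_congr rfl fun j' _ => hterm j', Finset.sum_add_distrib]
      congr 1
      · exact Finset.sum_congr rfl fun j' _ => by ring
      · simp [Pi.single_apply, mul_ite, mul_one, mul_zero, Finset.sum_ite_eq']
    · intro j
      simp only [hVdef]
      push_cast
      simp only [Matrix.vecMul, dotProduct]
      rw [Finset.mul_sum, Finset.mul_sum]
      have hterm : ∀ i' : Fin m, ((t:ℝ)+1) * (p (t+1) i' * M i' j) =
          ((t:ℝ) * p t i') * M i' j + (Pi.single (I t) 1 : Fin m → ℝ) i' * M i' j := by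
        intro i'
        calc ((t:ℝ)+1) * (p (t+1) i' * M i' j)
            = (((t:ℝ)+1) * p (t+1) i') * M i' j := by ring
          _ = ((t:ℝ) * p t i' + (Pi.single (I t) 1 : Fin m → ℝ) i') * M i' j := by rw [hp1 t i']
          _ = _ := by ring
      rw [Finset.sum_congr rfl fun i' _ => hterm i', Finset.sum_add_distrib]
      congr 1
      · exact Finset.sum_congr rfl fun i' _ => by ring
      · simp [Pi.single_apply, ite_mul, one_mul, zero_mul, Finset.sum_ite_eq']
  -- the matrix bound
  set a : ℝ := ∑ i, ∑ j, |M i j| with hadef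
  have ha0 : 0 ≤ a := Finset.sum_nonneg fun i _ => Finset.sum_nonneg fun j _ => abs_nonneg _
  have ha : ∀ i j, |M i j| ≤ a := by
    intro i j
    calc |M i j| ≤ ∑ j', |M i j'| :=
          Finset.single_le_sum (f := fun j' => |M i j'|) (fun j' _ => abs_nonneg _)
            (Finset.mem_univ j)
      _ ≤ a := Finset.single_le_sum (f := fun i' => ∑ j', |M i' j'|)
          (fun i' _ => Finset.sum_nonneg fun _ _ => abs_nonneg _) (Finset.mem_univ i)
  have hkey := RobinsonFP.robinson_key M ha ha0
    ((Finset.univ : Finset (Fin m)).card + (Finset.univ : Finset (Fin n)).card)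
    Finset.univ Finset.univ hum hun le_rfl
  have hU0 : Finset.univ.sup' hum (U 0) = 0 := by
    have hz : U 0 = fun _ => (0:ℝ) := by funext i; simp [hUdef]
    rw [hz]
    exact Finset.sup'_const _ _
  have hV0 : Finset.univ.inf' hun (V 0) = 0 := by
    have hz : V 0 = fun _ => (0:ℝ) := by funext j; simp [hVdef]
    rw [hz]
    exact Finset.inf'_const _ _
  have hUt : ∀ t : ℕ, Finset.univ.sup' hum (U t) =
      (t:ℝ) * Finset.univ.sup' hum (fun i => M.mulVec (q t) i) := by
    intro t
    have := RobinsonFP.sup'_mul_nonneg hum (c := (t:ℝ)) (by positivity)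
      (fun i => M.mulVec (q t) i)
    simpa [hUdef] using this
  have hVt : ∀ t : ℕ, Finset.univ.inf' hun (V t) =
      (t:ℝ) * Finset.univ.inf' hun (fun j => M.vecMul (p t) j) := by
    intro t
    have := RobinsonFP.inf'_mul_nonneg hun (c := (t:ℝ)) (by positivity)
      (fun j => M.vecMul (p t) j)
    simpa [hVdef] using this
  have hphi0 : Tendsto (fun t => RobinsonFP.Phi M hum hun (p t, q t)) atTop (nhds 0) := by
    rw [Metric.tendsto_atTop]
    intro ε hε
    obtain ⟨C, hC0, hC⟩ := hkey (ε/2) (by linarith)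
    refine ⟨⌈2*C/ε⌉₊ + 1, fun t hT => ?_⟩
    have ht1 : 1 ≤ t := le_trans (by omega) hT
    have htR : (0:ℝ) < t := by exact_mod_cast ht1
    have hCb : C < (ε/2) * t := by
      have h1 : (2*C/ε : ℝ) ≤ (⌈2*C/ε⌉₊ : ℕ) := Nat.le_ceil _
      have h3 : ((⌈2*C/ε⌉₊ + 1 : ℕ) : ℝ) ≤ (t:ℝ) := by exact_mod_cast hT
      push_cast at h3
      have h4 : 2*C/ε < (t:ℝ) := by linarith
      rw [div_lt_iff₀ hε] at h4
      linarith
    have hgap := hC U V I J t (hsys t) t le_rfl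
    rw [hU0, hV0, hUt t, hVt t] at hgap
    have hnon := RobinsonFP.phi_nonneg (M := M) hum hun (hsimp t).1 (hsimp t).2
    rw [Real.dist_eq, sub_zero, abs_of_nonneg hnon]
    have hφval : RobinsonFP.Phi M hum hun (p t, q t) =
        Finset.univ.sup' hum (fun i => M.mulVec (q t) i) -
        Finset.univ.inf' hun (fun j => M.vecMul (p t) j) := rfl
    rw [hφval]
    have hfac : (t:ℝ) * Finset.univ.sup' hum (fun i => M.mulVec (q t) i) -
        (t:ℝ) * Finset.univ.inf' hun (fun j => M.vecMul (p t) j) =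
        (t:ℝ) * (Finset.univ.sup' hum (fun i => M.mulVec (q t) i) -
          Finset.univ.inf' hun (fun j => M.vecMul (p t) j)) := by ring
    rw [hfac] at hgap
    by_contra hcon
    push_neg at hcon
    have : (t:ℝ) * ε ≤ (t:ℝ) * (Finset.univ.sup' hum (fun i => M.mulVec (q t) i) -
        Finset.univ.inf' hun (fun j => M.vecMul (p t) j)) :=
      mul_le_mul_of_nonneg_left hcon (le_of_lt htR)
    nlinarith
  rw [Metric.tendsto_atTop]
  intro ε hε
  obtain ⟨δ, hδ0, hδ⟩ := RobinsonFP.uniform_delta hum hun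
    {pq : (Fin m → ℝ) × (Fin n → ℝ) | IsNash (H + E) pq.1 pq.2} hNashΦ hε
  obtain ⟨T, hT⟩ := Metric.tendsto_atTop.1 hphi0 δ hδ0
  refine ⟨T, fun t ht => ?_⟩
  have h1 := hT t ht
  rw [Real.dist_eq, sub_zero] at h1
  have h2 : RobinsonFP.Phi M hum hun (p t, q t) < δ := lt_of_le_of_lt (le_abs_self _) h1
  have h3 := hδ (p t, q t) (hsimp t).1 (hsimp t).2 h2
  rw [Real.dist_eq, sub_zero, abs_of_nonneg Metric.infDist_nonneg]
  exact h3
end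

section
/- Every normalized harmonic m×n bimatrix game H can be written in exactly one way as H = I + Z, where I is a normalized identical interest game and Z is a normalized zero-sum game; in particular, the zero-sum equivalent potential component of H in the strategic decomposition (𝓘∩𝓝) ⊕ (𝓩∩𝓝) ⊕ 𝓑 is zero. -/
open Matrix Filter

lemma keyAux {m n : ℕ} (hm : 1 ≤ m) (hn : 1 ≤ n)
    (M : Matrix (Fin m) (Fin n) ℝ) (f : Fin m → ℝ) (g : Fin n → ℝ)
    (hform : ∀ i j, M i j = f i + g j)
    (hcol : ∀ j, ∑ i, M i j = 0) (hrow : ∀ i, ∑ j, M i j = 0) :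
    M = 0 := by
  have hm' : (0:ℝ) < m := by exact_mod_cast hm
  have hn' : (0:ℝ) < n := by exact_mod_cast hn
  set F := ∑ i, f i with hF
  set G := ∑ j, g j with hG
  have hcol' : ∀ j, F + (m:ℝ) * g j = 0 := by
    intro j
    have := hcol j
    simp only [hform] at this
    rw [Finset.sum_add_distrib, Finset.sum_const, Finset.card_univ, Fintype.card_fin] at this
    simpa [nsmul_eq_mul] using this
  have hrow' : ∀ i, (n:ℝ) * f i + G = 0 := by
    intro i
    have := hrow i
    simp only [hform] at this
    rw [Finset.sum_add_distrib, Finset.sum_const, Finset.card_univ, Fintype.card_fin] at this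
    simpa [nsmul_eq_mul, add_comm] using this
  ext i j
  have h1 := hcol' j
  have h2 := hrow' i
  have h3 : (n:ℝ) * F + (m:ℝ) * G = 0 := by
    have : ∑ i, ((n:ℝ) * f i + G) = 0 := by
      simp [hrow']
    rw [Finset.sum_add_distrib, Finset.sum_const, Finset.card_univ, Fintype.card_fin,
      ← Finset.mul_sum] at this
    simpa [nsmul_eq_mul] using this
  have : (m:ℝ) * (n:ℝ) * (f i + g j) = 0 := by nlinarith
  have h4 : f i + g j = 0 := by
    have hmn : (m:ℝ) * (n:ℝ) ≠ 0 := by positivity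
    exact (mul_eq_zero.mp this).resolve_left hmn
  simp [hform, h4]

theorem stmt13 {m n : ℕ} (hm : 1 ≤ m) (hn : 1 ≤ n) (H : Game m n)
    (hH : NormHarmonic m n H) :
    (∃! d : Game m n × Game m n,
      IdInterest d.1 ∧ Normalized d.1 ∧ ZeroSum d.2 ∧ Normalized d.2 ∧
      H = d.1 + d.2) ∧
    (∀ I Z B : Game m n, IdInterest I → Normalized I → ZeroSum Z → Normalized Z →
      IsZSEP B → H = I + Z + B → B = 0) := by
  obtain ⟨⟨hAcol, hBrow⟩, hharm⟩ := hH
  have hm' : (0:ℝ) < m := by exact_mod_cast hm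
  have hn' : (0:ℝ) < n := by exact_mod_cast hn
  have hpt : ∀ i j, (m:ℝ) * H.1 i j + (n:ℝ) * H.2 i j = 0 := by
    intro i j
    have := congrFun (congrFun hharm i) j
    simpa [Matrix.add_apply, Matrix.smul_apply, smul_eq_mul] using this
  have hArow : ∀ i, ∑ j, H.1 i j = 0 := by
    intro i
    have h : ∀ j, H.1 i j = -((n:ℝ)/m) * H.2 i j := by
      intro j
      have := hpt i j
      field_simp
      linarith
    calc ∑ j, H.1 i j = ∑ j, -((n:ℝ)/m) * H.2 i j := by simp [h]
      _ = -((n:ℝ)/m) * ∑ j, H.2 i j := by rw [Finset.mul_sum]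
      _ = 0 := by rw [hBrow i]; ring
  have hBcol : ∀ j, ∑ i, H.2 i j = 0 := by
    intro j
    have h : ∀ i, H.2 i j = -((m:ℝ)/n) * H.1 i j := by
      intro i
      have := hpt i j
      field_simp
      linarith
    calc ∑ i, H.2 i j = ∑ i, -((m:ℝ)/n) * H.1 i j := by simp [h]
      _ = -((m:ℝ)/n) * ∑ i, H.1 i j := by rw [Finset.mul_sum]
      _ = 0 := by rw [hAcol j]; ring
  constructor
  · refine ⟨(((1/2:ℝ) • (H.1 + H.2), (1/2:ℝ) • (H.1 + H.2)),
      ((1/2:ℝ) • (H.1 - H.2), (1/2:ℝ) • (H.2 - H.1))), ⟨rfl, ?_, ?_, ?_, ?_⟩, ?_⟩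
    · constructor
      · intro j
        have : ∑ i, ((1/2:ℝ) • (H.1 + H.2)) i j = (1/2:ℝ) * (∑ i, H.1 i j + ∑ i, H.2 i j) := by
          rw [← Finset.sum_add_distrib, Finset.mul_sum]
          simp [Matrix.add_apply, Matrix.smul_apply, smul_eq_mul, mul_add]
        rw [this, hAcol j, hBcol j]; ring
      · intro i
        have : ∑ j, ((1/2:ℝ) • (H.1 + H.2)) i j = (1/2:ℝ) * (∑ j, H.1 i j + ∑ j, H.2 i j) := by
          rw [← Finset.sum_add_distrib, Finset.mul_sum]
          simp [Matrix.add_apply, Matrix.smul_apply, smul_eq_mul, mul_add]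
        rw [this, hArow i, hBrow i]; ring
    · show (1/2:ℝ) • (H.1 - H.2) + (1/2:ℝ) • (H.2 - H.1) = 0
      ext i j
      simp [Matrix.add_apply, Matrix.smul_apply, Matrix.sub_apply, smul_eq_mul]
      ring
    · constructor
      · intro j
        have : ∑ i, ((1/2:ℝ) • (H.1 - H.2)) i j = (1/2:ℝ) * (∑ i, H.1 i j - ∑ i, H.2 i j) := by
          rw [← Finset.sum_sub_distrib, Finset.mul_sum]
          simp [Matrix.sub_apply, Matrix.smul_apply, smul_eq_mul, mul_sub]
        rw [this, hAcol j, hBcol j]; ring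
      · intro i
        have : ∑ j, ((1/2:ℝ) • (H.2 - H.1)) i j = (1/2:ℝ) * (∑ j, H.2 i j - ∑ j, H.1 i j) := by
          rw [← Finset.sum_sub_distrib, Finset.mul_sum]
          simp [Matrix.sub_apply, Matrix.smul_apply, smul_eq_mul, mul_sub]
        rw [this, hBrow i, hArow i]; ring
    · ext i j <;>
        simp [Matrix.add_apply, Matrix.smul_apply, Matrix.sub_apply, smul_eq_mul] <;> ring
    · rintro ⟨⟨I1, I2⟩, ⟨Z1, Z2⟩⟩ ⟨hi, hni, hz, hnz, hs⟩
      have hi' : I1 = I2 := hi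
      have hz' : Z1 + Z2 = 0 := hz
      have hA : H.1 = I1 + Z1 := congrArg Prod.fst hs
      have hB : H.2 = I2 + Z2 := congrArg Prod.snd hs
      have e1 : I1 = (1/2:ℝ) • (H.1 + H.2) := by
        ext i j
        have h1 := congrFun (congrFun hA i) j
        have h2 := congrFun (congrFun hB i) j
        have h3 := congrFun (congrFun hz' i) j
        have h4 := congrFun (congrFun hi' i) j
        simp [Matrix.add_apply, Matrix.smul_apply, smul_eq_mul] at *
        linarith
      have e2 : Z1 = (1/2:ℝ) • (H.1 - H.2) := by
        ext i j
        have h1 := congrFun (congrFun hA i) j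
        have h2 := congrFun (congrFun hB i) j
        have h3 := congrFun (congrFun hz' i) j
        have h4 := congrFun (congrFun hi' i) j
        simp [Matrix.add_apply, Matrix.sub_apply, Matrix.smul_apply, smul_eq_mul] at *
        linarith
      have e3 : I2 = (1/2:ℝ) • (H.1 + H.2) := hi' ▸ e1
      have e4 : Z2 = (1/2:ℝ) • (H.2 - H.1) := by
        ext i j
        have h1 := congrFun (congrFun hA i) j
        have h2 := congrFun (congrFun hB i) j
        have h3 := congrFun (congrFun hz' i) j
        have h4 := congrFun (congrFun hi' i) j
        simp [Matrix.add_apply, Matrix.sub_apply, Matrix.smul_apply, smul_eq_mul] at *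
        linarith
      simp [e1, e2, e3, e4, Prod.ext_iff]
  · rintro I Z B hI hNI hZ hNZ ⟨⟨I', E', hI', ⟨x, y, hx, hy⟩, hBeq⟩,
      ⟨Z', E'', hZ', ⟨x', y', hx', hy'⟩, hBeq'⟩⟩ hEq
    -- pointwise equations for B
    have hB1 : ∀ i j, B.1 i j = I'.1 i j + x j := by
      intro i j
      have := congrFun (congrFun (congrArg Prod.fst hBeq) i) j
      simp [Matrix.add_apply, hx] at this; linarith
    have hB2 : ∀ i j, B.2 i j = I'.1 i j + y i := by
      intro i j
      have := congrFun (congrFun (congrArg Prod.snd hBeq) i) j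
      have hI'' := congrFun (congrFun hI'.symm i) j
      simp [Matrix.add_apply, hy] at this
      rw [this, hI'']
    have hB1' : ∀ i j, B.1 i j = Z'.1 i j + x' j := by
      intro i j
      have := congrFun (congrFun (congrArg Prod.fst hBeq') i) j
      simp [Matrix.add_apply, hx'] at this; linarith
    have hB2' : ∀ i j, B.2 i j = -Z'.1 i j + y' i := by
      intro i j
      have := congrFun (congrFun (congrArg Prod.snd hBeq') i) j
      have hzz := congrFun (congrFun hZ' i) j
      simp [Matrix.add_apply, hy'] at this hzz
      rw [this]; linarith
    -- B.1 i j = f1 i + g1 j, B.2 i j = f2 i + g2 j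
    have hform1 : ∀ i j, B.1 i j = (y' i - y i)/2 + (x' j + x j)/2 := by
      intro i j
      have h1 := hB1 i j; have h2 := hB2 i j; have h3 := hB1' i j; have h4 := hB2' i j
      linarith
    have hform2 : ∀ i j, B.2 i j = (y' i + y i)/2 + (x' j - x j)/2 := by
      intro i j
      have h1 := hB1 i j; have h2 := hB2 i j; have h3 := hB1' i j; have h4 := hB2' i j
      linarith
    -- normalization sums for B via B = H - I - Z
    have hBpt1 : ∀ i j, B.1 i j = H.1 i j - I.1 i j - Z.1 i j := by
      intro i j
      have := congrFun (congrFun (congrArg Prod.fst hEq) i) j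
      simp [Matrix.add_apply] at this; linarith
    have hBpt2 : ∀ i j, B.2 i j = H.2 i j - I.2 i j - Z.2 i j := by
      intro i j
      have := congrFun (congrFun (congrArg Prod.snd hEq) i) j
      simp [Matrix.add_apply] at this; linarith
    have hIrow1 : ∀ i, ∑ j, I.1 i j = 0 := by
      intro i; have := hNI.2 i; rw [← hI] at this; exact this
    have hIcol2 : ∀ j, ∑ i, I.2 i j = 0 := by
      intro j; have := hNI.1 j; rw [hI] at this; exact this
    have hZ2neg : ∀ i j, Z.2 i j = -Z.1 i j := by
      intro i j
      have := congrFun (congrFun hZ i) j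
      simp [Matrix.add_apply] at this; linarith
    have hZrow1 : ∀ i, ∑ j, Z.1 i j = 0 := by
      intro i
      have := hNZ.2 i
      have h : ∑ j, Z.2 i j = ∑ j, -Z.1 i j := by simp [hZ2neg]
      rw [h, Finset.sum_neg_distrib] at this
      linarith
    have hZcol2 : ∀ j, ∑ i, Z.2 i j = 0 := by
      intro j
      have := hNZ.1 j
      have h : ∑ i, Z.2 i j = ∑ i, -Z.1 i j := by simp [hZ2neg]
      rw [h, Finset.sum_neg_distrib]
      linarith
    have hcol1 : ∀ j, ∑ i, B.1 i j = 0 := by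
      intro j
      calc ∑ i, B.1 i j = ∑ i, (H.1 i j - I.1 i j - Z.1 i j) := by simp [hBpt1]
        _ = (∑ i, H.1 i j) - (∑ i, I.1 i j) - (∑ i, Z.1 i j) := by
            rw [Finset.sum_sub_distrib, Finset.sum_sub_distrib]
        _ = 0 := by rw [hAcol j, hNI.1 j, hNZ.1 j]; ring
    have hrow1 : ∀ i, ∑ j, B.1 i j = 0 := by
      intro i
      calc ∑ j, B.1 i j = ∑ j, (H.1 i j - I.1 i j - Z.1 i j) := by simp [hBpt1]
        _ = (∑ j, H.1 i j) - (∑ j, I.1 i j) - (∑ j, Z.1 i j) := by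
            rw [Finset.sum_sub_distrib, Finset.sum_sub_distrib]
        _ = 0 := by rw [hArow i, hIrow1 i, hZrow1 i]; ring
    have hcol2 : ∀ j, ∑ i, B.2 i j = 0 := by
      intro j
      calc ∑ i, B.2 i j = ∑ i, (H.2 i j - I.2 i j - Z.2 i j) := by simp [hBpt2]
        _ = (∑ i, H.2 i j) - (∑ i, I.2 i j) - (∑ i, Z.2 i j) := by
            rw [Finset.sum_sub_distrib, Finset.sum_sub_distrib]
        _ = 0 := by rw [hBcol j, hIcol2 j, hZcol2 j]; ring
    have hrow2 : ∀ i, ∑ j, B.2 i j = 0 := by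
      intro i
      calc ∑ j, B.2 i j = ∑ j, (H.2 i j - I.2 i j - Z.2 i j) := by simp [hBpt2]
        _ = (∑ j, H.2 i j) - (∑ j, I.2 i j) - (∑ j, Z.2 i j) := by
            rw [Finset.sum_sub_distrib, Finset.sum_sub_distrib]
        _ = 0 := by rw [hBrow i, hNI.2 i, hNZ.2 i]; ring
    have h1 : B.1 = 0 := keyAux hm hn B.1 (fun i => (y' i - y i)/2) (fun j => (x' j + x j)/2)
      hform1 hcol1 hrow1
    have h2 : B.2 = 0 := keyAux hm hn B.2 (fun i => (y' i + y i)/2) (fun j => (x' j - x j)/2)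
      hform2 hcol2 hrow2
    exact Prod.ext h1 h2
end

section
/- An m×n bimatrix game (A,B) admits a potential function, i.e. a matrix Φ ∈ ℝ^{m×n} with Φ_{ij} − Φ_{i'j} = A_{ij} − A_{i'j} for all i,i' ∈ [m], j ∈ [n] and Φ_{ij} − Φ_{ij'} = B_{ij} − B_{ij'} for all i ∈ [m], j,j' ∈ [n], if and only if (A,B) is the sum of an identical interest game and a non-strategic game, i.e. (A,B) ∈ 𝓘 + 𝓔. -/
open Matrix Filter

theorem stmt17 {m n : ℕ} (hm : 1 ≤ m) (hn : 1 ≤ n) (G : Game m n) :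
    (∃ Φ : Matrix (Fin m) (Fin n) ℝ,
      (∀ (i i' : Fin m) (j : Fin n), Φ i j - Φ i' j = G.1 i j - G.1 i' j) ∧
      (∀ (i : Fin m) (j j' : Fin n), Φ i j - Φ i j' = G.2 i j - G.2 i j')) ↔
    IsPotentialGame G := by
  constructor
  · rintro ⟨Φ, h1, h2⟩
    have i0 : Fin m := ⟨0, hm⟩
    have j0 : Fin n := ⟨0, hn⟩
    refine ⟨(Φ, Φ), (fun i j => G.1 i0 j - Φ i0 j, fun i j => G.2 i j0 - Φ i j0),
      rfl, ⟨fun j => G.1 i0 j - Φ i0 j, fun i => G.2 i j0 - Φ i j0, fun i j => rfl,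
      fun i j => rfl⟩, ?_⟩
    apply Prod.ext <;> ext i j <;>
      simp only [Prod.fst_add, Prod.snd_add, Matrix.add_apply]
    · have := h1 i i0 j; show G.1 i j = Φ i j + (G.1 i0 j - Φ i0 j); linarith
    · have := h2 i j j0; show G.2 i j = Φ i j + (G.2 i j0 - Φ i j0); linarith
  · rintro ⟨I, E, hI, ⟨x, y, hx, hy⟩, hG⟩
    refine ⟨I.1, fun i i' j => ?_, fun i j j' => ?_⟩
    · have : G.1 = I.1 + E.1 := by rw [hG]; rfl
      rw [this]; simp [Matrix.add_apply, hx i j, hx i' j]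
    · have : G.2 = I.2 + E.2 := by rw [hG]; rfl
      rw [this, ← hI]; simp [Matrix.add_apply, hy i j, hy i j']
end

section
/- An m×n bimatrix game (A,B) is a zero-sum equivalent potential game, i.e. (A,B) ∈ (𝓘+𝓔) ∩ (𝓩+𝓔), if and only if there exist vectors u, y ∈ ℝ^m and v, x ∈ ℝ^n such that A_{ij} = u_i + x_j and B_{ij} = v_j + y_i for all i ∈ [m], j ∈ [n]. -/
open Matrix Filter

theorem stmt18 {m n : ℕ} (hm : 1 ≤ m) (hn : 1 ≤ n) (G : Game m n) :
    IsZSEP G ↔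
    ∃ (u y : Fin m → ℝ) (v x : Fin n → ℝ),
      (∀ i j, G.1 i j = u i + x j) ∧ (∀ i j, G.2 i j = v j + y i) := by
  constructor
  · rintro ⟨⟨I, E1, hI, ⟨x1, y1, hx1, hy1⟩, hGE1⟩, ⟨Z, E2, hZ, ⟨x2, y2, hx2, hy2⟩, hGE2⟩⟩
    refine ⟨fun i => (y2 i - y1 i) / 2, fun i => (y1 i + y2 i) / 2,
      fun j => (x2 j - x1 j) / 2, fun j => (x1 j + x2 j) / 2, ?_, ?_⟩ <;> intro i j
    · have h1 : G.1 i j = I.1 i j + x1 j := by rw [hGE1]; simp [hx1]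
      have h2 : G.2 i j = I.1 i j + y1 i := by rw [hGE1, hI]; simp [hy1]
      have h3 : G.1 i j = Z.1 i j + x2 j := by rw [hGE2]; simp [hx2]
      have h4 : G.2 i j = -Z.1 i j + y2 i := by
        have : Z.2 i j = -Z.1 i j := by
          have := congrFun (congrFun hZ i) j
          simp [Matrix.add_apply] at this; linarith
        rw [hGE2]; simp [hy2, this]
      linarith
    · have h1 : G.1 i j = I.1 i j + x1 j := by rw [hGE1]; simp [hx1]
      have h2 : G.2 i j = I.1 i j + y1 i := by rw [hGE1, hI]; simp [hy1]
      have h3 : G.1 i j = Z.1 i j + x2 j := by rw [hGE2]; simp [hx2]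
      have h4 : G.2 i j = -Z.1 i j + y2 i := by
        have : Z.2 i j = -Z.1 i j := by
          have := congrFun (congrFun hZ i) j
          simp [Matrix.add_apply] at this; linarith
        rw [hGE2]; simp [hy2, this]
      linarith
  · rintro ⟨u, y, v, x, hA, hB⟩
    constructor
    · refine ⟨(Matrix.of fun i j => u i + v j, Matrix.of fun i j => u i + v j),
        (Matrix.of fun i j => x j - v j, Matrix.of fun i j => y i - u i),
        rfl, ⟨fun j => x j - v j, fun i => y i - u i, fun i j => rfl, fun i j => rfl⟩, ?_⟩
      refine Prod.ext ?_ ?_ <;> ext i j <;>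
        simp [Matrix.add_apply, hA, hB] <;> ring
    · refine ⟨(Matrix.of fun i j => u i - v j, Matrix.of fun i j => v j - u i),
        (Matrix.of fun i j => x j + v j, Matrix.of fun i j => y i + u i),
        ?_, ⟨fun j => x j + v j, fun i => y i + u i, fun i j => rfl, fun i j => rfl⟩, ?_⟩
      · ext i j; simp [Matrix.add_apply]
      · refine Prod.ext ?_ ?_ <;> ext i j <;>
          simp [Matrix.add_apply, hA, hB] <;> ring
end
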